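/- arXiv:2001.09575 — 3 statements merged into one kernel-verified Lean document; each statement's English description precedes it below -/
import Mathlib

section
/- The number of distinct edge directions of a $k \times n$ transportation polytope is at most $\sum_{p=2}^{k} \frac{1}{p} \cdot \frac{n! \, k!}{(n-p)! \, (k-p)!}$, and this sum is bounded above by $e^{1/n} \, n^k \, k! \le e \cdot k! \, n^k$. -/
/-- The k×n transportation polytope with supplies s and demands d. -/
def transportationPolytope (k n : ℕ) (s : Fin k → ℝ) (d : Fin n → ℝ) :
    Set (Fin k × Fin n → ℝ) :=
  {x | (∀ p, 0 ≤ x p) ∧ (∀ i, ∑ j, x (i, j) = s i) ∧ (∀ j, ∑ i, x (i, j) = d j)}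

open Finset

lemma succ_mod_ne {p s : ℕ} (hp : 2 ≤ p) (hs : s < p) : (s+1) % p ≠ s := by
  rcases Nat.lt_or_ge (s+1) p with h | h
  · rw [Nat.mod_eq_of_lt h]; omega
  · have : s + 1 = p := by omega
    rw [this, Nat.mod_self]; omega

lemma sum_range_rot {M : Type*} [AddCommMonoid M] (p r : ℕ) (hr : r < p) (f : ℕ → M) :
    ∑ t ∈ Finset.range p, f ((t + r) % p) = ∑ t ∈ Finset.range p, f t := by
  refine Finset.sum_nbij' (fun t => (t + r) % p) (fun t => (t + (p - r)) % p) ?_ ?_ ?_ ?_ ?_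
  · intro a _; exact mem_range.2 (Nat.mod_lt _ (by omega))
  · intro a _; exact mem_range.2 (Nat.mod_lt _ (by omega))
  · intro a ha
    show ((a + r) % p + (p - r)) % p = a
    rw [Nat.mod_add_mod]
    have : a + r + (p - r) = a + p := by omega
    rw [this, Nat.add_mod_right, Nat.mod_eq_of_lt (mem_range.1 ha)]
  · intro a ha
    show ((a + (p - r)) % p + r) % p = a
    rw [Nat.mod_add_mod]
    have : a + (p - r) + r = a + p := by omega
    rw [this, Nat.add_mod_right, Nat.mod_eq_of_lt (mem_range.1 ha)]
  · intro a _; rfl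

/-- The alternating ±1 vector of a cycle given by rows `a 0,…,a (p-1)` and
columns `b 0,…,b (p-1)`. -/
def cycVecN (k n p : ℕ) (a : ℕ → Fin k) (b : ℕ → Fin n) : Fin k × Fin n → ℝ :=
  fun e => ∑ t ∈ Finset.range p,
    ((if e = (a t, b t) then (1:ℝ) else 0) - if e = (a ((t+1) % p), b t) then 1 else 0)

lemma cycVecN_congr {k n p : ℕ} {a a' : ℕ → Fin k} {b b' : ℕ → Fin n}
    (ha : ∀ t < p, a t = a' t) (hb : ∀ t < p, b t = b' t) :
    cycVecN k n p a b = cycVecN k n p a' b' := by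
  funext e
  unfold cycVecN
  refine Finset.sum_congr rfl fun t ht => ?_
  have htp := mem_range.1 ht
  rw [ha t htp, hb t htp, ha ((t+1) % p) (Nat.mod_lt _ (by omega))]

lemma cycVecN_rot {k n p : ℕ} (r : ℕ) (hr : r < p) (a : ℕ → Fin k) (b : ℕ → Fin n) :
    cycVecN k n p (fun t => a ((t + r) % p)) (fun t => b ((t + r) % p)) = cycVecN k n p a b := by
  funext e
  unfold cycVecN
  rw [← sum_range_rot p r hr (fun s => ((if e = (a s, b s) then (1:ℝ) else 0)
      - if e = (a ((s+1) % p), b s) then 1 else 0))]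
  refine Finset.sum_congr rfl fun t ht => ?_
  have h1 : ((t+1) % p + r) % p = ((t + r) % p + 1) % p := by
    rw [Nat.mod_add_mod, Nat.mod_add_mod]; ring_nf
  show ((if e = (a ((t + r) % p), b ((t + r) % p)) then (1:ℝ) else 0) -
      if e = (a (((t+1) % p + r) % p), b ((t + r) % p)) then 1 else 0) = _
  rw [h1]

lemma cycVecN_rowsum {k n p : ℕ} (hp : 2 ≤ p) (a : ℕ → Fin k) (b : ℕ → Fin n) (i : Fin k) :
    ∑ j, cycVecN k n p a b (i, j) = 0 := by
  unfold cycVecN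
  rw [Finset.sum_comm]
  have key : ∀ t : ℕ, ∑ j : Fin n, ((if (i,j) = (a t, b t) then (1:ℝ) else 0)
      - if (i,j) = (a ((t+1) % p), b t) then 1 else 0)
      = (if i = a t then (1:ℝ) else 0) - (if i = a ((t+1)%p) then 1 else 0) := by
    intro t
    rw [Finset.sum_sub_distrib]
    congr 1
    · by_cases h : i = a t
      · simp [Prod.ext_iff, h]
      · simp [Prod.ext_iff, h]
    · by_cases h : i = a ((t+1)%p)
      · simp [Prod.ext_iff, h]
      · simp [Prod.ext_iff, h]
  calc ∑ t ∈ range p, ∑ j : Fin n, ((if (i,j) = (a t, b t) then (1:ℝ) else 0)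
      - if (i,j) = (a ((t+1) % p), b t) then 1 else 0)
      = ∑ t ∈ range p, ((if i = a t then (1:ℝ) else 0) - (if i = a ((t+1)%p) then 1 else 0)) := by
        exact Finset.sum_congr rfl fun t _ => key t
    _ = 0 := by
        rw [Finset.sum_sub_distrib]
        have := sum_range_rot p 1 (by omega) (fun s => if i = a (s % p) then (1:ℝ) else 0)
        have h2 : ∀ t ∈ range p, (if i = a ((t+1) % p) then (1:ℝ) else 0)
            = (fun s => if i = a (s % p) then (1:ℝ) else 0) ((t + 1) % p) := by
          intro t ht; simp only []
          rw [Nat.mod_mod_of_dvd _ dvd_rfl]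
        rw [Finset.sum_congr rfl h2, this]
        have h3 : ∀ t ∈ range p, (if i = a (t % p) then (1:ℝ) else 0)
            = (if i = a t then (1:ℝ) else 0) := by
          intro t ht; rw [Nat.mod_eq_of_lt (mem_range.1 ht)]
        rw [Finset.sum_congr rfl h3, sub_self]

lemma cycVecN_colsum {k n p : ℕ} (hp : 2 ≤ p) (a : ℕ → Fin k) (b : ℕ → Fin n) (j : Fin n) :
    ∑ i, cycVecN k n p a b (i, j) = 0 := by
  unfold cycVecN
  rw [Finset.sum_comm]
  refine Finset.sum_eq_zero fun t _ => ?_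
  rw [Finset.sum_sub_distrib, sub_eq_zero]
  by_cases h : j = b t
  · simp [Prod.ext_iff, h]
  · simp [Prod.ext_iff, h]

lemma cycVecN_support {k n p : ℕ} (a : ℕ → Fin k) (b : ℕ → Fin n) (e : Fin k × Fin n)
    (he : cycVecN k n p a b e ≠ 0) :
    ∃ t < p, e = (a t, b t) ∨ e = (a ((t+1) % p), b t) := by
  by_contra hcon
  push_neg at hcon
  apply he
  unfold cycVecN
  refine Finset.sum_eq_zero fun t ht => ?_
  have := hcon t (mem_range.1 ht)
  rw [if_neg this.1, if_neg this.2, sub_zero]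

lemma cycVecN_apply_one {k n p : ℕ} (hp : 2 ≤ p) {a : ℕ → Fin k} {b : ℕ → Fin n}
    (ha : Set.InjOn a (Set.Iio p)) (hb : Set.InjOn b (Set.Iio p)) {s : ℕ} (hs : s < p) :
    cycVecN k n p a b (a s, b s) = 1 := by
  unfold cycVecN
  rw [Finset.sum_sub_distrib]
  have h1 : ∑ t ∈ range p, (if (a s, b s) = (a t, b t) then (1:ℝ) else 0) = 1 := by
    rw [Finset.sum_eq_single_of_mem s (mem_range.2 hs)]
    · simp
    · intro t ht hts
      rw [if_neg]
      intro hcon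
      rw [Prod.ext_iff] at hcon
      exact hts (hb (mem_range.1 ht) hs hcon.2.symm)
  have h2 : ∑ t ∈ range p, (if (a s, b s) = (a ((t+1) % p), b t) then (1:ℝ) else 0) = 0 := by
    refine Finset.sum_eq_zero fun t ht => ?_
    rw [if_neg]
    intro hcon
    rw [Prod.ext_iff] at hcon
    have hts : s = t := hb hs (mem_range.1 ht) hcon.2
    subst hts
    have : s = (s+1) % p := ha hs (Nat.mod_lt _ (by omega)) hcon.1
    exact succ_mod_ne hp hs this.symm
  rw [h1, h2, sub_zero]

/-- In a nonzero "kernel" vector one can find an alternating cycle inside the support. -/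
lemma exists_cycle {k n : ℕ} (v : Fin k × Fin n → ℝ)
    (hrow : ∀ i, ∑ j, v (i, j) = 0) (hcol : ∀ j, ∑ i, v (i, j) = 0) (hv : v ≠ 0) :
    ∃ p a b, 2 ≤ p ∧ p ≤ k ∧ Set.InjOn a (Set.Iio p) ∧ Set.InjOn b (Set.Iio p) ∧
      ∀ t < p, v (a t, b t) ≠ 0 ∧ v (a ((t+1) % p), b t) ≠ 0 := by
  classical
  -- helper: in a zero-sum family with a nonzero entry there is another nonzero entry
  have other : ∀ {ι : Type} [Fintype ι] [DecidableEq ι] (f : ι → ℝ), (∑ i, f i = 0) →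
      ∀ i0, f i0 ≠ 0 → ∃ i, i ≠ i0 ∧ f i ≠ 0 := by
    intro ι _ _ f hsum i0 h0
    by_contra hcon
    push_neg at hcon
    have : ∑ i, f i = f i0 := by
      refine Finset.sum_eq_single_of_mem i0 (Finset.mem_univ _) fun i _ hi => ?_
      by_contra h'
      exact h' (hcon i hi)
    rw [hsum] at this
    exact h0 this.symm
  have hstep : ∀ e : Fin k × Fin n, v e ≠ 0 →
      ∃ e' : Fin k × Fin n, v e' ≠ 0 ∧ v (e'.1, e.2) ≠ 0 ∧ e'.1 ≠ e.1 ∧ e'.2 ≠ e.2 := by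
    intro e he
    have he' : v (e.1, e.2) ≠ 0 := by rwa [Prod.mk.eta]
    obtain ⟨i', hi', hvi'⟩ := other (fun i => v (i, e.2)) (hcol e.2) e.1 he'
    obtain ⟨j', hj', hvj'⟩ := other (fun j => v (i', j)) (hrow i') e.2 hvi'
    exact ⟨(i', j'), hvj', hvi', hi', hj'⟩
  -- starting edge
  have h0 : ∃ e, v e ≠ 0 := by
    by_contra hcon; push_neg at hcon; exact hv (funext hcon)
  obtain ⟨e0, he0⟩ := h0
  -- the walk
  let g : {e : Fin k × Fin n // v e ≠ 0} → {e : Fin k × Fin n // v e ≠ 0} :=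
    fun e => ⟨Classical.choose (hstep e.1 e.2), (Classical.choose_spec (hstep e.1 e.2)).1⟩
  let seq : ℕ → {e : Fin k × Fin n // v e ≠ 0} := fun t => g^[t] ⟨e0, he0⟩
  set r : ℕ → Fin k := fun t => (seq t).1.1 with hr_def
  set c : ℕ → Fin n := fun t => (seq t).1.2 with hc_def
  have hseq_succ : ∀ t, seq (t+1) = g (seq t) := by
    intro t
    show g^[t+1] _ = _
    rw [Function.iterate_succ_apply']
  have hv1 : ∀ t, v (r t, c t) ≠ 0 := by
    intro t
    have := (seq t).2
    rwa [← Prod.mk.eta (p := (seq t).1)] at this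
  have hspec : ∀ t, v (r (t+1), c t) ≠ 0 ∧ r (t+1) ≠ r t ∧ c (t+1) ≠ c t := by
    intro t
    have hs := Classical.choose_spec (hstep (seq t).1 (seq t).2)
    have h1 : (seq (t+1)).1 = Classical.choose (hstep (seq t).1 (seq t).2) := by
      rw [hseq_succ t]
    constructor
    · show v ((seq (t+1)).1.1, (seq t).1.2) ≠ 0
      rw [h1]; exact hs.2.1
    constructor
    · show (seq (t+1)).1.1 ≠ (seq t).1.1
      rw [h1]; exact hs.2.2.1
    · show (seq (t+1)).1.2 ≠ (seq t).1.2
      rw [h1]; exact hs.2.2.2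
  -- pigeonhole: a repeat exists
  have hk0 : 0 < k := (r 0).pos
  have hrep : ∃ t, (∃ s' < t, r s' = r t) ∨ (∃ s' < t, c s' = c t) := by
    obtain ⟨x, hx, y, hy, hxy, hfxy⟩ :=
      Finset.exists_ne_map_eq_of_card_lt_of_maps_to (s := Finset.range (k+1))
        (t := Finset.univ) (by simp [hk0]) (fun a _ => Finset.mem_univ (r a))
    rcases Nat.lt_or_ge x y with h | h
    · exact ⟨y, Or.inl ⟨x, h, hfxy⟩⟩
    · exact ⟨x, Or.inl ⟨y, by omega, hfxy.symm⟩⟩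
  set T := Nat.find hrep with hT_def
  have hTspec := Nat.find_spec hrep
  have hTmin := fun t (ht : t < T) => Nat.find_min hrep ht
  have Hr : ∀ s' t, s' < t → t < T → r s' ≠ r t := by
    intro s' t hst htT hcon
    exact hTmin t htT (Or.inl ⟨s', hst, hcon⟩)
  have Hc : ∀ s' t, s' < t → t < T → c s' ≠ c t := by
    intro s' t hst htT hcon
    exact hTmin t htT (Or.inr ⟨s', hst, hcon⟩)
  by_cases hrowT : ∃ s' < T, r s' = r T
  · -- row repeat case
    obtain ⟨t1, ht1, hrt⟩ := hrowT
    have hT1 : 1 ≤ T := by omega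
    have hp2 : t1 + 2 ≤ T := by
      rcases Nat.lt_or_ge (t1+1) T with h | h
      · omega
      · exfalso
        have ht1T : t1 = T - 1 := by omega
        have := (hspec (T-1)).2.1
        rw [show T - 1 + 1 = T by omega] at this
        rw [ht1T] at hrt
        exact this hrt.symm
    refine ⟨T - t1, fun u => r (t1 + u), fun u => c (t1 + u), by omega, ?_, ?_, ?_, ?_⟩
    · -- p ≤ k
      have hinj : Function.Injective (fun u : Fin (T - t1) => r (t1 + u.1)) := by
        intro u1 u2 h12
        simp only [] at h12
        rcases Nat.lt_trichotomy (t1 + u1.1) (t1 + u2.1) with h | h | h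
        · exact absurd h12 (Hr _ _ h (by omega))
        · exact Fin.ext (by omega)
        · exact absurd h12.symm (Hr _ _ h (by omega))
      have := Fintype.card_le_of_injective _ hinj
      simpa using this
    · intro u1 hu1 u2 hu2 h12
      simp only [Set.mem_Iio] at hu1 hu2
      rcases Nat.lt_trichotomy (t1 + u1) (t1 + u2) with h | h | h
      · exact absurd h12 (Hr _ _ h (by omega))
      · omega
      · exact absurd h12.symm (Hr _ _ h (by omega))
    · intro u1 hu1 u2 hu2 h12
      simp only [Set.mem_Iio] at hu1 hu2
      rcases Nat.lt_trichotomy (t1 + u1) (t1 + u2) with h | h | h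
      · exact absurd h12 (Hc _ _ h (by omega))
      · omega
      · exact absurd h12.symm (Hc _ _ h (by omega))
    · intro u hu
      refine ⟨hv1 _, ?_⟩
      show v (r (t1 + (u+1) % (T - t1)), c (t1 + u)) ≠ 0
      rcases Nat.lt_or_ge (u+1) (T - t1) with h | h
      · rw [Nat.mod_eq_of_lt h]
        have := (hspec (t1 + u)).1
        rwa [show t1 + u + 1 = t1 + (u+1) by omega] at this
      · have hup : u + 1 = T - t1 := by omega
        have hT' := (hspec (T - 1)).1
        rw [show T - 1 + 1 = T by omega] at hT'
        rw [hup, Nat.mod_self, Nat.add_zero, hrt, show t1 + u = T - 1 by omega]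
        exact hT'
  · -- column repeat case
    have hcolT : ∃ s' < T, c s' = c T := by
      rcases hTspec with h | h
      · exact absurd h hrowT
      · exact h
    obtain ⟨t1, ht1, hct⟩ := hcolT
    have hT1 : 1 ≤ T := by omega
    have hp2 : t1 + 2 ≤ T := by
      rcases Nat.lt_or_ge (t1+1) T with h | h
      · omega
      · exfalso
        have ht1T : t1 = T - 1 := by omega
        have := (hspec (T-1)).2.2
        rw [show T - 1 + 1 = T by omega] at this
        rw [ht1T] at hct
        exact this hct.symm
    -- rows injective on [0, T]
    have Hr' : ∀ s' t, s' < t → t ≤ T → r s' ≠ r t := by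
      intro s' t hst htT hcon
      rcases Nat.lt_or_ge t T with h | h
      · exact Hr s' t hst h hcon
      · have : t = T := by omega
        subst this
        exact hrowT ⟨s', hst, hcon⟩
    refine ⟨T - t1, fun u => r (t1 + 1 + u), fun u => c (t1 + 1 + u), by omega, ?_, ?_, ?_, ?_⟩
    · have hinj : Function.Injective (fun u : Fin (T - t1) => r (t1 + 1 + u.1)) := by
        intro u1 u2 h12
        simp only [] at h12
        rcases Nat.lt_trichotomy (t1 + 1 + u1.1) (t1 + 1 + u2.1) with h | h | h
        · exact absurd h12 (Hr' _ _ h (by omega))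
        · exact Fin.ext (by omega)
        · exact absurd h12.symm (Hr' _ _ h (by omega))
      have := Fintype.card_le_of_injective _ hinj
      simpa using this
    · intro u1 hu1 u2 hu2 h12
      simp only [Set.mem_Iio] at hu1 hu2
      rcases Nat.lt_trichotomy (t1 + 1 + u1) (t1 + 1 + u2) with h | h | h
      · exact absurd h12 (Hr' _ _ h (by omega))
      · omega
      · exact absurd h12.symm (Hr' _ _ h (by omega))
    · -- columns injective
      have key : ∀ u1 u2, u1 < u2 → u2 < T - t1 → c (t1 + 1 + u1) = c (t1 + 1 + u2) → False := by
        intro u1 u2 hlt hu2 h12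
        rcases Nat.lt_or_ge (t1 + 1 + u2) T with h | h
        · exact Hc (t1 + 1 + u1) (t1 + 1 + u2) (by omega) h h12
        · have hu2T : t1 + 1 + u2 = T := by omega
          rw [hu2T, ← hct] at h12
          exact Hc t1 (t1 + 1 + u1) (by omega) (by omega) h12.symm
      intro u1 hu1 u2 hu2 h12
      simp only [Set.mem_Iio] at hu1 hu2
      simp only [] at h12
      rcases Nat.lt_trichotomy u1 u2 with h | h | h
      · exact absurd h12 (fun hc => key u1 u2 h hu2 hc)
      · exact h
      · exact absurd h12 (fun hc => key u2 u1 h hu1 hc.symm)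
    · intro u hu
      refine ⟨hv1 _, ?_⟩
      show v (r (t1 + 1 + (u+1) % (T - t1)), c (t1 + 1 + u)) ≠ 0
      rcases Nat.lt_or_ge (u+1) (T - t1) with h | h
      · rw [Nat.mod_eq_of_lt h]
        have := (hspec (t1 + 1 + u)).1
        rwa [show t1 + 1 + u + 1 = t1 + 1 + (u+1) by omega] at this
      · have hup : u + 1 = T - t1 := by omega
        have heq : c (t1 + 1 + u) = c t1 := by
          rw [show t1 + 1 + u = T by omega, ← hct]
        rw [hup, Nat.mod_self, Nat.add_zero, heq]
        exact (hspec t1).1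


/-- Any "kernel" vector supported where the midpoint of an exposed segment is positive
lies in the span of the segment direction. -/
lemma ker_mem_span {k n : ℕ} (s : Fin k → ℝ) (d : Fin n → ℝ)
    (x y : Fin k × Fin n → ℝ)
    (l : (Fin k × Fin n → ℝ) →L[ℝ] ℝ)
    (hface : segment ℝ x y = {z ∈ transportationPolytope k n s d |
      ∀ z' ∈ transportationPolytope k n s d, l z' ≤ l z})
    (w : Fin k × Fin n → ℝ)
    (hwrow : ∀ i, ∑ j, w (i, j) = 0) (hwcol : ∀ j, ∑ i, w (i, j) = 0)
    (hwsupp : ∀ e, w e ≠ 0 → 0 < ((1/2 : ℝ) • (x + y)) e) :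
    w ∈ Submodule.span ℝ {y - x} := by
  classical
  by_cases hw0 : w = 0
  · rw [hw0]; exact Submodule.zero_mem _
  obtain ⟨e0, he0⟩ : ∃ e, w e ≠ 0 := by
    by_contra hcon; push_neg at hcon; exact hw0 (funext hcon)
  have hne : Nonempty (Fin k × Fin n) := ⟨e0⟩
  set A := transportationPolytope k n s d with hA_def
  set m : Fin k × Fin n → ℝ := (1/2 : ℝ) • (x + y) with hm_def
  have hm_seg : m ∈ segment ℝ x y := by
    refine ⟨1/2, 1/2, by norm_num, by norm_num, by norm_num, ?_⟩
    rw [hm_def]; ext e; simp [Pi.smul_apply, Pi.add_apply]; ring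
  have hm_mem : m ∈ A ∧ ∀ z' ∈ A, l z' ≤ l m := by
    have := hm_seg; rw [hface] at this; exact this
  have hm_A := hm_mem.1
  have hm_nonneg : ∀ e, 0 ≤ m e := hm_A.1
  -- choose ε
  set f : Fin k × Fin n → ℝ := fun e => if w e = 0 then 1 else m e / |w e| with hf_def
  set ε : ℝ := Finset.univ.inf' Finset.univ_nonempty f with hε_def
  have hε_pos : 0 < ε := by
    rw [hε_def, Finset.lt_inf'_iff]
    intro e _
    rw [hf_def]
    by_cases h : w e = 0
    · simp [h]
    · simp only [h, if_false]
      exact div_pos (hwsupp e h) (abs_pos.2 h)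
  have hbound : ∀ e, w e ≠ 0 → ε * |w e| ≤ m e := by
    intro e he
    have h1 : ε ≤ f e := Finset.inf'_le _ (Finset.mem_univ e)
    rw [hf_def] at h1
    simp only [he, if_false] at h1
    calc ε * |w e| ≤ (m e / |w e|) * |w e| := by
          exact mul_le_mul_of_nonneg_right h1 (abs_nonneg _)
      _ = m e := div_mul_cancel₀ _ (abs_ne_zero.2 he)
  -- perturbed points are in A
  have hmem_pm : ∀ t : ℝ, |t| ≤ ε → m + t • w ∈ A := by
    intro t ht
    refine ⟨?_, ?_, ?_⟩
    · intro e
      show 0 ≤ m e + t * w e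
      by_cases h : w e = 0
      · simp [h, hm_nonneg e]
      · have h2 : |t * w e| ≤ m e := by
          rw [abs_mul]
          calc |t| * |w e| ≤ ε * |w e| := by
                exact mul_le_mul_of_nonneg_right ht (abs_nonneg _)
            _ ≤ m e := hbound e h
        have := (abs_le.1 h2).1
        linarith
    · intro i
      have : ∀ j, (m + t • w) (i, j) = m (i, j) + t * w (i, j) := fun j => rfl
      simp only [this]
      rw [Finset.sum_add_distrib, ← Finset.mul_sum, hwrow i, hm_A.2.1 i, mul_zero, add_zero]
    · intro j
      have : ∀ i, (m + t • w) (i, j) = m (i, j) + t * w (i, j) := fun i => rfl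
      simp only [this]
      rw [Finset.sum_add_distrib, ← Finset.mul_sum, hwcol j, hm_A.2.2 j, mul_zero, add_zero]
  have hmem_p : m + ε • w ∈ A := hmem_pm ε (by rw [abs_of_pos hε_pos])
  have hmem_m : m + (-ε) • w ∈ A := hmem_pm (-ε) (by rw [abs_neg, abs_of_pos hε_pos])
  have hlp : l (m + ε • w) ≤ l m := hm_mem.2 _ hmem_p
  have hlm : l (m + (-ε) • w) ≤ l m := hm_mem.2 _ hmem_m
  simp only [map_add, map_smul, smul_eq_mul] at hlp hlm
  have hlw : l w = 0 := by nlinarith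
  have hface_mem : m + ε • w ∈ segment ℝ x y := by
    rw [hface]
    refine ⟨hmem_p, ?_⟩
    intro z' hz'
    simp only [map_add, map_smul, smul_eq_mul, hlw, mul_zero, add_zero]
    exact hm_mem.2 z' hz'
  obtain ⟨a, b, ha, hb, hab, heq⟩ := hface_mem
  have haeq : a = 1 - b := by linarith
  have key : ε • w = (b - 1/2) • (y - x) := by
    rw [haeq] at heq
    have h2 : ε • w = (1-b) • x + b • y - m := by rw [heq]; abel
    rw [h2, hm_def]
    module
  rw [Submodule.mem_span_singleton]
  refine ⟨ε⁻¹ * (b - 1/2), ?_⟩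
  rw [← smul_smul, ← key, smul_smul, inv_mul_cancel₀ hε_pos.ne', one_smul]

/-- The direction of an exposed segment of the transportation polytope is spanned by
an alternating cycle vector. -/
lemma edge_dir {k n : ℕ} (s : Fin k → ℝ) (d : Fin n → ℝ)
    (x y : Fin k × Fin n → ℝ) (hxy : x ≠ y)
    (hexp : IsExposed ℝ (transportationPolytope k n s d) (segment ℝ x y)) :
    ∃ p a b, 2 ≤ p ∧ p ≤ k ∧ Set.InjOn a (Set.Iio p) ∧ Set.InjOn b (Set.Iio p) ∧
      Submodule.span ℝ {y - x} = Submodule.span ℝ {cycVecN k n p a b} := by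
  obtain ⟨l, hface⟩ := hexp ⟨x, left_mem_segment ℝ x y⟩
  have hxA : x ∈ transportationPolytope k n s d := by
    have := left_mem_segment ℝ x y; rw [hface] at this; exact this.1
  have hyA : y ∈ transportationPolytope k n s d := by
    have := right_mem_segment ℝ x y; rw [hface] at this; exact this.1
  set v : Fin k × Fin n → ℝ := y - x with hv_def
  have hv0 : v ≠ 0 := sub_ne_zero.2 (Ne.symm hxy)
  have hvrow : ∀ i, ∑ j, v (i, j) = 0 := by
    intro i
    have : ∀ j : Fin n, v (i, j) = y (i, j) - x (i, j) := fun j => rfl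
    simp only [this]
    rw [Finset.sum_sub_distrib, hyA.2.1 i, hxA.2.1 i, sub_self]
  have hvcol : ∀ j, ∑ i, v (i, j) = 0 := by
    intro j
    have : ∀ i : Fin k, v (i, j) = y (i, j) - x (i, j) := fun i => rfl
    simp only [this]
    rw [Finset.sum_sub_distrib, hyA.2.2 j, hxA.2.2 j, sub_self]
  obtain ⟨p, a, b, hp2, hpk, ha, hb, hedges⟩ := exists_cycle v hvrow hvcol hv0
  refine ⟨p, a, b, hp2, hpk, ha, hb, ?_⟩
  set u : Fin k × Fin n → ℝ := cycVecN k n p a b with hu_def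
  have hu_mem : u ∈ Submodule.span ℝ {y - x} := by
    apply ker_mem_span s d x y l hface u (cycVecN_rowsum hp2 a b) (cycVecN_colsum hp2 a b)
    intro e he
    obtain ⟨t, htp, hcase⟩ := cycVecN_support a b e he
    have hv_ne : v e ≠ 0 := by
      rcases hcase with h | h
      · rw [h]; exact (hedges t htp).1
      · rw [h]; exact (hedges t htp).2
    have hx0 : 0 ≤ x e := hxA.1 e
    have hy0 : 0 ≤ y e := hyA.1 e
    have hne : x e ≠ y e := by
      intro hcon
      apply hv_ne
      show y e - x e = 0
      rw [hcon, sub_self]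
    show 0 < (1/2 : ℝ) * (x e + y e)
    rcases lt_or_gt_of_ne hne with h | h
    · nlinarith
    · nlinarith
  rw [Submodule.mem_span_singleton] at hu_mem
  obtain ⟨c, hc⟩ := hu_mem
  have hc0 : c ≠ 0 := by
    intro hcon
    rw [hcon, zero_smul] at hc
    have h1 : u (a 0, b 0) = 1 := cycVecN_apply_one hp2 ha hb (by omega)
    rw [← hc] at h1
    norm_num at h1
  rw [← hc]
  exact (Submodule.span_singleton_smul_eq (isUnit_iff_ne_zero.2 hc0) _).symm


lemma rot_inj {α : Type*} {p : ℕ} (hp0 : 0 < p) (a : ℕ → α) (hinj : Set.InjOn a (Set.Iio p))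
    (r : ℕ) : Function.Injective (fun t : Fin p => a ((t.1 + r) % p)) := by
  intro t1 t2 h
  simp only [] at h
  have e1 : (t1.1 + r) % p < p := Nat.mod_lt _ hp0
  have e2 : (t2.1 + r) % p < p := Nat.mod_lt _ hp0
  have h2 : (t1.1 + r) % p = (t2.1 + r) % p := hinj e1 e2 h
  have h3 : t1.1 % p = t2.1 % p := Nat.ModEq.add_right_cancel' r h2
  rw [Nat.mod_eq_of_lt t1.2, Nat.mod_eq_of_lt t2.2] at h3
  exact Fin.ext h3

lemma cast_descFactorial {n p : ℕ} (h : p ≤ n) :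
    (n.descFactorial p : ℝ) = (n.factorial : ℝ) / (n - p).factorial := by
  rw [eq_div_iff (by exact_mod_cast (Nat.factorial_pos (n-p)).ne')]
  rw [mul_comm]
  exact_mod_cast Nat.factorial_mul_descFactorial h

theorem stmt_5' (k n : ℕ) (hk : 2 ≤ k) (hkn : k ≤ n) (s : Fin k → ℝ) (d : Fin n → ℝ) :
    ({W : Submodule ℝ (Fin k × Fin n → ℝ) | ∃ x y : Fin k × Fin n → ℝ, x ≠ y ∧
        IsExposed ℝ (transportationPolytope k n s d) (segment ℝ x y) ∧
        W = Submodule.span ℝ {y - x}}.ncard : ℝ)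
      ≤ ∑ p ∈ Finset.Icc 2 k, (1 / (p : ℝ)) *
          ((n.factorial : ℝ) * k.factorial / ((n - p).factorial * (k - p).factorial)) := by
  classical
  have hk0 : 0 < k := by omega
  have hn0 : 0 < n := by omega
  set S : Set (Submodule ℝ (Fin k × Fin n → ℝ)) :=
    {W : Submodule ℝ (Fin k × Fin n → ℝ) | ∃ x y : Fin k × Fin n → ℝ, x ≠ y ∧
        IsExposed ℝ (transportationPolytope k n s d) (segment ℝ x y) ∧
        W = Submodule.span ℝ {y - x}} with hS_def
  have hex : ∀ W ∈ S, ∃ q : ℕ × (ℕ → Fin k) × (ℕ → Fin n),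
      2 ≤ q.1 ∧ q.1 ≤ k ∧ Set.InjOn q.2.1 (Set.Iio q.1) ∧ Set.InjOn q.2.2 (Set.Iio q.1) ∧
      W = Submodule.span ℝ {cycVecN k n q.1 q.2.1 q.2.2} := by
    rintro W ⟨x, y, hxy, hexp, rfl⟩
    obtain ⟨p, a, b, h1, h2, h3, h4, h5⟩ := edge_dir s d x y hxy hexp
    exact ⟨(p, a, b), h1, h2, h3, h4, h5⟩
  set dflt : ℕ × (ℕ → Fin k) × (ℕ → Fin n) :=
    (0, fun _ => ⟨0, hk0⟩, fun _ => ⟨0, hn0⟩) with hdflt_def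
  set c : Submodule ℝ (Fin k × Fin n → ℝ) → ℕ × (ℕ → Fin k) × (ℕ → Fin n) :=
    fun W => if h : W ∈ S then Classical.choose (hex W h) else dflt with hc_def
  have hcspec : ∀ W, W ∈ S →
      2 ≤ (c W).1 ∧ (c W).1 ≤ k ∧ Set.InjOn (c W).2.1 (Set.Iio (c W).1) ∧
      Set.InjOn (c W).2.2 (Set.Iio (c W).1) ∧
      W = Submodule.span ℝ {cycVecN k n (c W).1 (c W).2.1 (c W).2.2} := by
    intro W h
    rw [hc_def]
    simp only [dif_pos h]
    exact Classical.choose_spec (hex W h)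
  -- finiteness
  have hfin : S.Finite := by
    apply Set.Finite.subset (Set.finite_range
      (fun q : Fin (k+1) × (Fin k → Fin k) × (Fin k → Fin n) =>
        Submodule.span ℝ {cycVecN k n q.1.1 (fun t => q.2.1 ⟨t % k, Nat.mod_lt _ hk0⟩)
          (fun t => q.2.2 ⟨t % k, Nat.mod_lt _ hk0⟩)}))
    intro W hW
    obtain ⟨q, hq1, hq2, hq3, hq4, hq5⟩ := hex W hW
    refine ⟨(⟨q.1, by omega⟩, fun t => q.2.1 t.1, fun t => q.2.2 t.1), ?_⟩
    simp only []
    rw [hq5]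
    congr 2
    exact (cycVecN_congr
      (fun t ht => by show q.2.1 t = q.2.1 (t % k); rw [Nat.mod_eq_of_lt (by omega : t < k)])
      (fun t ht => by show q.2.2 t = q.2.2 (t % k); rw [Nat.mod_eq_of_lt (by omega : t < k)])).symm
  set FS : Finset (Submodule ℝ (Fin k × Fin n → ℝ)) := hfin.toFinset with hFS_def
  have hncard : S.ncard = FS.card := Set.ncard_eq_toFinset_card S hfin
  have hfiber : FS.card = ∑ p ∈ Finset.Icc 2 k,
      (FS.filter (fun W => (c W).1 = p)).card := by
    apply Finset.card_eq_sum_card_fiberwise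
    intro W hW
    have hWS : W ∈ S := hfin.mem_toFinset.1 hW
    have := hcspec W hWS
    exact Finset.mem_Icc.2 ⟨this.1, this.2.1⟩
  -- per-fiber bound
  have fiber_bound : ∀ p, 2 ≤ p → p ≤ k →
      (FS.filter (fun W => (c W).1 = p)).card * p
        ≤ k.descFactorial p * n.descFactorial p := by
    intro p hp2 hpk
    have hp0 : 0 < p := by omega
    set Φ : Submodule ℝ (Fin k × Fin n → ℝ) × ℕ → (Fin p ↪ Fin k) × (Fin p ↪ Fin n) :=
      fun Wr =>
        (if h : Function.Injective (fun t : Fin p => (c Wr.1).2.1 ((t.1 + Wr.2) % p))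
          then ⟨_, h⟩ else Fin.castLEEmb hpk,
         if h : Function.Injective (fun t : Fin p => (c Wr.1).2.2 ((t.1 + Wr.2) % p))
          then ⟨_, h⟩ else Fin.castLEEmb (hpk.trans hkn)) with hΦ_def
    have hcard := Finset.card_le_card_of_injOn Φ
      (s := (FS.filter (fun W => (c W).1 = p)) ×ˢ Finset.range p)
      (t := Finset.univ) (fun a _ => Finset.mem_univ _) ?_
    · rw [Finset.card_product, Finset.card_range] at hcard
      calc (FS.filter (fun W => (c W).1 = p)).card * p
          ≤ Fintype.card ((Fin p ↪ Fin k) × (Fin p ↪ Fin n)) := by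
            rw [← Finset.card_univ]; exact hcard
        _ = k.descFactorial p * n.descFactorial p := by
            simp [Fintype.card_prod, Fintype.card_embedding_eq]
    · -- injectivity
      rintro ⟨W1, r1⟩ h1 ⟨W2, r2⟩ h2 heq
      simp only [Finset.coe_product, Set.mem_prod, Finset.mem_coe, Finset.mem_filter,
        Finset.mem_range] at h1 h2
      obtain ⟨⟨hW1F, hP1⟩, hr1⟩ := h1
      obtain ⟨⟨hW2F, hP2⟩, hr2⟩ := h2
      have hW1S : W1 ∈ S := hfin.mem_toFinset.1 hW1F
      have hW2S : W2 ∈ S := hfin.mem_toFinset.1 hW2F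
      obtain ⟨-, -, ha1, hb1, hspan1⟩ := hcspec W1 hW1S
      obtain ⟨-, -, ha2, hb2, hspan2⟩ := hcspec W2 hW2S
      rw [hP1] at ha1 hb1 hspan1
      rw [hP2] at ha2 hb2 hspan2
      have hinja1 : Function.Injective (fun t : Fin p => (c W1).2.1 ((t.1 + r1) % p)) :=
        rot_inj hp0 _ ha1 r1
      have hinjb1 : Function.Injective (fun t : Fin p => (c W1).2.2 ((t.1 + r1) % p)) :=
        rot_inj hp0 _ hb1 r1
      have hinja2 : Function.Injective (fun t : Fin p => (c W2).2.1 ((t.1 + r2) % p)) :=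
        rot_inj hp0 _ ha2 r2
      have hinjb2 : Function.Injective (fun t : Fin p => (c W2).2.2 ((t.1 + r2) % p)) :=
        rot_inj hp0 _ hb2 r2
      have heq1 := congrArg Prod.fst heq
      have heq2 := congrArg Prod.snd heq
      rw [hΦ_def] at heq1 heq2
      simp only [dif_pos hinja1, dif_pos hinja2] at heq1
      simp only [dif_pos hinjb1, dif_pos hinjb2] at heq2
      have hfa : ∀ t : Fin p, (c W1).2.1 ((t.1 + r1) % p) = (c W2).2.1 ((t.1 + r2) % p) := by
        intro t
        have := congrArg (fun g : Fin p ↪ Fin k => g t) heq1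
        simpa using this
      have hfb : ∀ t : Fin p, (c W1).2.2 ((t.1 + r1) % p) = (c W2).2.2 ((t.1 + r2) % p) := by
        intro t
        have := congrArg (fun g : Fin p ↪ Fin n => g t) heq2
        simpa using this
      have hWeq : W1 = W2 := by
        rw [hspan1, hspan2]
        rw [← cycVecN_rot r1 hr1 (c W1).2.1 (c W1).2.2,
            ← cycVecN_rot r2 hr2 (c W2).2.1 (c W2).2.2]
        congr 2
        exact cycVecN_congr
          (fun t ht => hfa ⟨t, ht⟩)
          (fun t ht => hfb ⟨t, ht⟩)
      have hreq : r1 = r2 := by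
        have h0 := hfa ⟨0, hp0⟩
        simp only [Nat.zero_add, Nat.mod_eq_of_lt hr1, Nat.mod_eq_of_lt hr2] at h0
        rw [hWeq] at h0 ha1
        exact ha2 (by exact hr1) (by exact hr2) h0
      rw [Prod.ext_iff]
      exact ⟨hWeq, hreq⟩
  -- put everything together
  rw [hncard, hfiber]
  push_cast
  apply Finset.sum_le_sum
  intro p hp
  rw [Finset.mem_Icc] at hp
  obtain ⟨hp2, hpk⟩ := hp
  have hp0 : (0:ℝ) < p := by positivity
  have hnat := fiber_bound p hp2 hpk
  have hreal : ((FS.filter (fun W => (c W).1 = p)).card : ℝ) * p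
      ≤ (k.descFactorial p : ℝ) * n.descFactorial p := by exact_mod_cast hnat
  have hdk : (k.descFactorial p : ℝ) = (k.factorial : ℝ) / (k - p).factorial :=
    cast_descFactorial hpk
  have hdn : (n.descFactorial p : ℝ) = (n.factorial : ℝ) / (n - p).factorial :=
    cast_descFactorial (hpk.trans hkn)
  rw [hdk, hdn] at hreal
  rw [div_mul_div_comm] at hreal
  have h2 : ((FS.filter (fun W => (c W).1 = p)).card : ℝ)
      ≤ ((k.factorial : ℝ) * n.factorial / ((k - p).factorial * (n - p).factorial)) / p := by
    rw [le_div_iff₀ hp0]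
    exact hreal
  calc ((FS.filter (fun W => (c W).1 = p)).card : ℝ)
      ≤ ((k.factorial : ℝ) * n.factorial / ((k - p).factorial * (n - p).factorial)) / p := h2
    _ = 1 / (p : ℝ) * ((n.factorial : ℝ) * k.factorial
          / ((n - p).factorial * (k - p).factorial)) := by ring


lemma part2_bound (k n : ℕ) (hk : 2 ≤ k) (hkn : k ≤ n) :
    ∑ p ∈ Finset.Icc 2 k, (1 / (p : ℝ)) *
          ((n.factorial : ℝ) * k.factorial / ((n - p).factorial * (k - p).factorial))
        ≤ Real.exp (1 / n) * (n : ℝ) ^ k * k.factorial := by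
  have hn0 : 0 < n := by omega
  have hnR : (0:ℝ) < n := by exact_mod_cast hn0
  have hterm : ∀ p ∈ Finset.Icc 2 k, (1 / (p : ℝ)) *
      ((n.factorial : ℝ) * k.factorial / ((n - p).factorial * (k - p).factorial))
      ≤ (n : ℝ) ^ k * k.factorial * ((1/(n:ℝ)) ^ (k - p) / (k - p).factorial) := by
    intro p hp
    rw [Finset.mem_Icc] at hp
    obtain ⟨hp2, hpk⟩ := hp
    have hpn : p ≤ n := hpk.trans hkn
    have hRHS : (n : ℝ) ^ k * k.factorial * ((1/(n:ℝ)) ^ (k - p) / (k - p).factorial)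
        = (n : ℝ) ^ p * ((k.factorial : ℝ) / (k - p).factorial) := by
      have h1 : (n:ℝ) ^ p * (n:ℝ) ^ (k - p) = (n:ℝ) ^ k := by
        rw [← pow_add]; congr 1; omega
      calc (n : ℝ) ^ k * k.factorial * ((1/(n:ℝ)) ^ (k - p) / (k - p).factorial)
          = ((n:ℝ) ^ p * ((n:ℝ) ^ (k-p) * (1/(n:ℝ)) ^ (k-p))) * ((k.factorial : ℝ) / (k - p).factorial) := by
            rw [← h1]; ring
        _ = (n : ℝ) ^ p * ((k.factorial : ℝ) / (k - p).factorial) := by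
            rw [one_div, inv_pow, mul_inv_cancel₀ (pow_ne_zero _ hnR.ne'), mul_one]
    rw [hRHS]
    have hsplit : (n.factorial : ℝ) * k.factorial / ((n - p).factorial * (k - p).factorial)
        = ((n.factorial : ℝ) / (n-p).factorial) * ((k.factorial : ℝ) / (k-p).factorial) := by
      rw [div_mul_div_comm]
    rw [hsplit]
    have hnle : ((n.factorial:ℝ) / (n-p).factorial) ≤ (n:ℝ)^p := by
      rw [div_le_iff₀ (by exact_mod_cast (Nat.factorial_pos (n-p)))]
      have h1 : n.factorial = n.descFactorial p * (n-p).factorial := by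
        rw [mul_comm]; exact (Nat.factorial_mul_descFactorial hpn).symm
      have h2 : n.descFactorial p * (n-p).factorial ≤ n ^ p * (n-p).factorial :=
        Nat.mul_le_mul_right _ (Nat.descFactorial_le_pow n p)
      calc (n.factorial : ℝ) = (n.descFactorial p : ℝ) * (n-p).factorial := by
            exact_mod_cast congrArg (Nat.cast : ℕ → ℝ) h1
        _ ≤ (n:ℝ)^p * (n-p).factorial := by
            exact_mod_cast Nat.cast_le.2 h2
    have hfrac_nonneg : (0:ℝ) ≤ (k.factorial : ℝ) / (k-p).factorial := by positivity
    have h1p : (1 / (p:ℝ)) ≤ 1 := by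
      rw [div_le_one (by positivity)]
      exact_mod_cast (by omega : 1 ≤ p)
    calc (1 / (p : ℝ)) * (((n.factorial : ℝ) / (n-p).factorial) * ((k.factorial : ℝ) / (k-p).factorial))
        ≤ 1 * (((n.factorial : ℝ) / (n-p).factorial) * ((k.factorial : ℝ) / (k-p).factorial)) := by
          apply mul_le_mul_of_nonneg_right h1p
          positivity
      _ = ((n.factorial : ℝ) / (n-p).factorial) * ((k.factorial : ℝ) / (k-p).factorial) := by ring
      _ ≤ (n:ℝ)^p * ((k.factorial : ℝ) / (k-p).factorial) :=
          mul_le_mul_of_nonneg_right hnle hfrac_nonneg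
  calc ∑ p ∈ Finset.Icc 2 k, (1 / (p : ℝ)) *
          ((n.factorial : ℝ) * k.factorial / ((n - p).factorial * (k - p).factorial))
      ≤ ∑ p ∈ Finset.Icc 2 k, (n : ℝ) ^ k * k.factorial * ((1/(n:ℝ)) ^ (k - p) / (k - p).factorial) :=
        Finset.sum_le_sum hterm
    _ = (n : ℝ) ^ k * k.factorial * ∑ p ∈ Finset.Icc 2 k, ((1/(n:ℝ)) ^ (k - p) / (k - p).factorial) := by
        rw [Finset.mul_sum]
    _ = (n : ℝ) ^ k * k.factorial * ∑ q ∈ Finset.range (k - 1), ((1/(n:ℝ)) ^ q / q.factorial) := by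
        congr 1
        refine Finset.sum_nbij' (fun p => k - p) (fun q => k - q) ?_ ?_ ?_ ?_ ?_
        · intro a ha
          rw [Finset.mem_Icc] at ha
          rw [Finset.mem_range]
          show k - a < k - 1
          omega
        · intro a ha
          rw [Finset.mem_range] at ha
          rw [Finset.mem_Icc]
          constructor
          · show 2 ≤ k - a
            omega
          · show k - a ≤ k
            omega
        · intro a ha; rw [Finset.mem_Icc] at ha
          show k - (k - a) = a
          omega
        · intro a ha; rw [Finset.mem_range] at ha
          show k - (k - a) = a
          omega
        · intro a _; rfl
    _ ≤ (n : ℝ) ^ k * k.factorial * Real.exp (1/(n:ℝ)) := by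
        apply mul_le_mul_of_nonneg_left
        · exact Real.sum_le_exp_of_nonneg (by positivity) _
        · positivity
    _ = Real.exp (1 / n) * (n : ℝ) ^ k * k.factorial := by ring

lemma part3_bound (k n : ℕ) (hk : 2 ≤ k) (hkn : k ≤ n) :
    Real.exp (1 / n) * (n : ℝ) ^ k * k.factorial
        ≤ Real.exp 1 * (k.factorial : ℝ) * (n : ℝ) ^ k := by
  have hn0 : (0:ℝ) < n := by exact_mod_cast (by omega : 0 < n)
  have hexp : Real.exp (1 / n) ≤ Real.exp 1 := by
    apply Real.exp_le_exp.2
    rw [div_le_one hn0]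
    exact_mod_cast (by omega : 1 ≤ n)
  calc Real.exp (1 / n) * (n : ℝ) ^ k * k.factorial
      ≤ Real.exp 1 * (n : ℝ) ^ k * k.factorial := by
        apply mul_le_mul_of_nonneg_right
        · exact mul_le_mul_of_nonneg_right hexp (by positivity)
        · positivity
    _ = Real.exp 1 * (k.factorial : ℝ) * (n : ℝ) ^ k := by ring


/-- the number of distinct edge directions (lines spanned by geometric edges)
of a k×n transportation polytope is at most ∑_{p=2}^k (1/p)·n!k!/((n-p)!(k-p)!), which is
at most e^{1/n}·nᵏ·k! ≤ e·k!·nᵏ. -/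
theorem stmt_5 (k n : ℕ) (hk : 2 ≤ k) (hkn : k ≤ n) (s : Fin k → ℝ) (d : Fin n → ℝ) :
    ({W : Submodule ℝ (Fin k × Fin n → ℝ) | ∃ x y : Fin k × Fin n → ℝ, x ≠ y ∧
        IsExposed ℝ (transportationPolytope k n s d) (segment ℝ x y) ∧
        W = Submodule.span ℝ {y - x}}.ncard : ℝ)
      ≤ ∑ p ∈ Finset.Icc 2 k, (1 / (p : ℝ)) *
          ((n.factorial : ℝ) * k.factorial / ((n - p).factorial * (k - p).factorial)) ∧
    ∑ p ∈ Finset.Icc 2 k, (1 / (p : ℝ)) *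
          ((n.factorial : ℝ) * k.factorial / ((n - p).factorial * (k - p).factorial))
        ≤ Real.exp (1 / n) * (n : ℝ) ^ k * k.factorial ∧
    Real.exp (1 / n) * (n : ℝ) ^ k * k.factorial
        ≤ Real.exp 1 * (k.factorial : ℝ) * (n : ℝ) ^ k := by
  exact ⟨stmt_5' k n hk hkn s d, part2_bound k n hk hkn, part3_bound k n hk hkn⟩
end

section
/- Let $x^*$ be the optimal vertex of a nondegenerate transportation problem with cost $c$, with support a spanning tree $T$. Let $s_1,\ldots,s_k$ be supply nodes and $d_1,\ldots,d_k$ demand nodes ($k\ge 2$) with $s_i$ adjacent to $d_i$ in $T$ for all $i$. Then $c_{s_1,d_1} - c_{d_1,s_2} + c_{s_2,d_2} - c_{d_2,s_3} + \cdots + c_{s_k,d_k} - c_{d_k,s_1} < 0$. -/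
/-- The m×n transportation polytope with supplies s and demands d. -/
def transportationPolytope' (m n : ℕ) (s : Fin m → ℝ) (d : Fin n → ℝ) :
    Set (Fin m → Fin n → ℝ) :=
  {x | (∀ i j, 0 ≤ x i j) ∧ (∀ i, ∑ j, x i j = s i) ∧ (∀ j, ∑ i, x i j = d j)}

/-! ### Auxiliary machinery -/

noncomputable def cycDelta {m n k : ℕ} (sC : Fin k → Fin m) (dC : Fin k → Fin n)
    [NeZero k] : Fin m → Fin n → ℝ := fun i j =>
  ∑ t : Fin k, ((if i = sC (t+1) ∧ j = dC t then (1:ℝ) else 0)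
      - (if i = sC t ∧ j = dC t then (1:ℝ) else 0))

section cycDeltaFacts

variable {m n k : ℕ} [NeZero k] (sC : Fin k → Fin m) (dC : Fin k → Fin n)

lemma fin_add_one_ne (hk : 2 ≤ k) (t : Fin k) : t + 1 ≠ t := by
  intro h
  have h2 : (1 : Fin k) = 0 :=
    add_left_cancel (a := t) (b := 1) (c := 0) (by rw [add_zero]; exact h)
  have := congrArg Fin.val h2
  rw [Fin.val_one'] at this
  simp at this
  omega

lemma cycDelta_row (i : Fin m) : ∑ j, cycDelta sC dC i j = 0 := by
  unfold cycDelta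
  rw [Finset.sum_comm]
  have key : ∀ t : Fin k, ∑ j, ((if i = sC (t+1) ∧ j = dC t then (1:ℝ) else 0)
      - (if i = sC t ∧ j = dC t then (1:ℝ) else 0))
      = (if i = sC (t+1) then (1:ℝ) else 0) - (if i = sC t then (1:ℝ) else 0) := by
    intro t
    rw [Finset.sum_sub_distrib]
    simp [ite_and]
  rw [Finset.sum_congr rfl (fun t _ => key t), Finset.sum_sub_distrib]
  rw [sub_eq_zero]
  exact Fintype.sum_equiv (Equiv.addRight 1) _ _ (fun t => rfl)

lemma cycDelta_col (j : Fin n) : ∑ i, cycDelta sC dC i j = 0 := by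
  unfold cycDelta
  rw [Finset.sum_comm]
  apply Finset.sum_eq_zero
  intro t _
  rw [Finset.sum_sub_distrib]
  simp [ite_and]

lemma cycDelta_cost (c : Fin m → Fin n → ℝ) :
    ∑ i, ∑ j, c i j * cycDelta sC dC i j
      = ∑ t : Fin k, (c (sC (t+1)) (dC t) - c (sC t) (dC t)) := by
  unfold cycDelta
  have key : ∀ i, ∑ j, c i j * ∑ t : Fin k, ((if i = sC (t+1) ∧ j = dC t then (1:ℝ) else 0)
      - (if i = sC t ∧ j = dC t then (1:ℝ) else 0))
      = ∑ t : Fin k, ∑ j, (c i j * (if i = sC (t+1) ∧ j = dC t then (1:ℝ) else 0)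
      - c i j * (if i = sC t ∧ j = dC t then (1:ℝ) else 0)) := by
    intro i
    rw [← Finset.sum_comm]
    apply Finset.sum_congr rfl
    intro j _
    rw [Finset.mul_sum]
    exact Finset.sum_congr rfl (fun t _ => by ring)
  rw [Finset.sum_congr rfl (fun i _ => key i), Finset.sum_comm]
  apply Finset.sum_congr rfl
  intro t _
  simp [Finset.sum_sub_distrib, ite_and]

lemma cycDelta_neg_edge (hk : 2 ≤ k) (hsC : Function.Injective sC)
    (hdC : Function.Injective dC) (t : Fin k) : cycDelta sC dC (sC t) (dC t) = -1 := by
  unfold cycDelta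
  rw [Finset.sum_sub_distrib]
  have h1 : ∑ t' : Fin k, (if sC t = sC (t'+1) ∧ dC t = dC t' then (1:ℝ) else 0) = 0 := by
    apply Finset.sum_eq_zero
    intro t' _
    rw [if_neg]
    rintro ⟨ha, hb⟩
    have ht' : t' = t := hdC hb.symm
    subst ht'
    exact fin_add_one_ne hk t' (hsC ha.symm)
  have h2 : ∑ t' : Fin k, (if sC t = sC t' ∧ dC t = dC t' then (1:ℝ) else 0) = 1 := by
    rw [Finset.sum_eq_single t]
    · simp
    · intro t' _ hne
      rw [if_neg]
      rintro ⟨ha, _⟩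
      exact hne (hsC ha.symm)
    · simp
  rw [h1, h2]; ring

lemma cycDelta_nonneg_off (i : Fin m) (j : Fin n)
    (h : ∀ t : Fin k, ¬(i = sC t ∧ j = dC t)) : 0 ≤ cycDelta sC dC i j := by
  unfold cycDelta
  apply Finset.sum_nonneg
  intro t _
  rw [if_neg (h t)]
  split <;> norm_num

end cycDeltaFacts

section polytopeFacts

variable (m n : ℕ) (s : Fin m → ℝ) (d : Fin n → ℝ) (c : Fin m → Fin n → ℝ)

lemma tp_convex : Convex ℝ (transportationPolytope' m n s d) := by
  intro z1 h1 z2 h2 a b ha hb hab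
  obtain ⟨h1n, h1r, h1c⟩ := h1
  obtain ⟨h2n, h2r, h2c⟩ := h2
  have happ : ∀ i j, (a • z1 + b • z2) i j = a * z1 i j + b * z2 i j := by
    intro i j; simp
  refine ⟨fun i j => ?_, fun i => ?_, fun j => ?_⟩
  · rw [happ]; exact add_nonneg (mul_nonneg ha (h1n i j)) (mul_nonneg hb (h2n i j))
  · simp only [happ, Finset.sum_add_distrib, ← Finset.mul_sum, h1r, h2r]
    rw [← add_mul, hab, one_mul]
  · simp only [happ, Finset.sum_add_distrib, ← Finset.mul_sum, h1c, h2c]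
    rw [← add_mul, hab, one_mul]

lemma tp_coord_continuous (i : Fin m) (j : Fin n) :
    Continuous fun x : Fin m → Fin n → ℝ => x i j :=
  (continuous_apply j).comp (continuous_apply i)

lemma tp_closed : IsClosed (transportationPolytope' m n s d) := by
  have h1 : IsClosed {x : Fin m → Fin n → ℝ | ∀ i j, 0 ≤ x i j} := by
    simp only [Set.setOf_forall]
    exact isClosed_iInter fun i => isClosed_iInter fun j =>
      isClosed_le continuous_const (tp_coord_continuous m n i j)
  have h2 : IsClosed {x : Fin m → Fin n → ℝ | ∀ i, ∑ j, x i j = s i} := by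
    simp only [Set.setOf_forall]
    exact isClosed_iInter fun i => isClosed_eq
      (continuous_finset_sum _ fun j _ => tp_coord_continuous m n i j) continuous_const
  have h3 : IsClosed {x : Fin m → Fin n → ℝ | ∀ j, ∑ i, x i j = d j} := by
    simp only [Set.setOf_forall]
    exact isClosed_iInter fun j => isClosed_eq
      (continuous_finset_sum _ fun i _ => tp_coord_continuous m n i j) continuous_const
  exact h1.inter (h2.inter h3)

lemma tp_compact : IsCompact (transportationPolytope' m n s d) := by
  have hK : IsCompact
      (Set.univ.pi fun i : Fin m => Set.univ.pi fun _ : Fin n => Set.Icc (0:ℝ) (s i)) :=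
    isCompact_univ_pi fun i => isCompact_univ_pi fun _ => isCompact_Icc
  apply hK.of_isClosed_subset (tp_closed m n s d)
  intro x hx
  obtain ⟨hn, hr, _⟩ := hx
  intro i _ j _
  refine ⟨hn i j, ?_⟩
  calc x i j ≤ ∑ j', x i j' :=
        Finset.single_le_sum (fun j' _ => hn i j') (Finset.mem_univ j)
    _ = s i := hr i

lemma tp_cost_continuous : Continuous fun x : Fin m → Fin n → ℝ => ∑ i, ∑ j, c i j * x i j :=
  continuous_finset_sum _ fun i _ => continuous_finset_sum _ fun j _ =>
    continuous_const.mul (tp_coord_continuous m n i j)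

lemma tp_cost_combo (z1 z2 : Fin m → Fin n → ℝ) (a b : ℝ) :
    ∑ i, ∑ j, c i j * (a • z1 + b • z2) i j
      = a * (∑ i, ∑ j, c i j * z1 i j) + b * (∑ i, ∑ j, c i j * z2 i j) := by
  have happ : ∀ i j, c i j * (a • z1 + b • z2) i j
      = a * (c i j * z1 i j) + b * (c i j * z2 i j) := by
    intro i j; simp; ring
  simp only [happ, Finset.sum_add_distrib, ← Finset.mul_sum]

/-- The optimal face is a singleton: any feasible point with optimal cost equals xs. -/
lemma tp_face_singleton (xs : Fin m → Fin n → ℝ)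
    (hopt : ∀ y ∈ transportationPolytope' m n s d,
      ∑ i, ∑ j, c i j * xs i j ≤ ∑ i, ∑ j, c i j * y i j)
    (hnd : ∀ y ∈ Set.extremePoints ℝ (transportationPolytope' m n s d), y ≠ xs →
      ∑ i, ∑ j, c i j * xs i j < ∑ i, ∑ j, c i j * y i j)
    (y : Fin m → Fin n → ℝ) (hy : y ∈ transportationPolytope' m n s d)
    (hcost : ∑ i, ∑ j, c i j * y i j = ∑ i, ∑ j, c i j * xs i j) :
    y = xs := by
  set P := transportationPolytope' m n s d with hPdef
  set cost := fun x : Fin m → Fin n → ℝ => ∑ i, ∑ j, c i j * x i j with hcostdef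
  have hcombo := tp_cost_combo m n c
  set F := P ∩ {z | cost z = cost xs} with hFdef
  have hFsubP : F ⊆ P := Set.inter_subset_left
  have hFconv : Convex ℝ F := by
    intro z1 h1 z2 h2 a b ha hb hab
    refine ⟨tp_convex m n s d h1.1 h2.1 ha hb hab, ?_⟩
    have e1 : cost z1 = cost xs := h1.2
    have e2 : cost z2 = cost xs := h2.2
    show cost (a • z1 + b • z2) = cost xs
    calc cost (a • z1 + b • z2) = a * cost z1 + b * cost z2 := hcombo z1 z2 a b
      _ = cost xs := by rw [e1, e2, ← add_mul, hab, one_mul]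
  have hFclosed : IsClosed F :=
    (tp_closed m n s d).inter (isClosed_eq (tp_cost_continuous m n c) continuous_const)
  have hFcomp : IsCompact F := (tp_compact m n s d).of_isClosed_subset hFclosed hFsubP
  have hFext : IsExtreme ℝ P F := by
    constructor
    · exact hFsubP
    · intro x1 hx1 x2 hx2 x hxF hseg
      obtain ⟨a, b, ha, hb, hab, hsum⟩ := hseg
      have hcx : cost x = cost xs := hxF.2
      have h1 : cost xs ≤ cost x1 := hopt x1 hx1
      have h2 : cost xs ≤ cost x2 := hopt x2 hx2
      have hcomb : cost x = a * cost x1 + b * cost x2 := by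
        rw [← hsum]; exact hcombo x1 x2 a b
      have hsplit : a * cost xs + b * cost xs = cost xs := by
        rw [← add_mul, hab, one_mul]
      have e1 : cost x1 = cost xs := by
        by_contra hne
        have hgt : cost xs < cost x1 := lt_of_le_of_ne h1 (Ne.symm hne)
        have t1 : a * cost xs < a * cost x1 := mul_lt_mul_of_pos_left hgt ha
        have t2 : b * cost xs ≤ b * cost x2 := mul_le_mul_of_nonneg_left h2 hb.le
        linarith
      have e2 : cost x2 = cost xs := by
        by_contra hne
        have hgt : cost xs < cost x2 := lt_of_le_of_ne h2 (Ne.symm hne)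
        have t1 : b * cost xs < b * cost x2 := mul_lt_mul_of_pos_left hgt hb
        have t2 : a * cost xs ≤ a * cost x1 := mul_le_mul_of_nonneg_left h1 ha.le
        linarith
      exact ⟨hx1, e1⟩
  have hextsub : F.extremePoints ℝ ⊆ {xs} := by
    intro z hz
    have hzP : z ∈ Set.extremePoints ℝ P := hFext.extremePoints_subset_extremePoints hz
    have hzF : z ∈ F := hz.1
    by_contra hne
    have hlt : cost xs < cost z := hnd z hzP hne
    rw [hzF.2] at hlt
    exact lt_irrefl _ hlt
  have hKM := closure_convexHull_extremePoints hFcomp hFconv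
  have hFsub : F ⊆ {xs} := by
    rw [← hKM]
    calc closure (convexHull ℝ (F.extremePoints ℝ))
        ⊆ closure (convexHull ℝ {xs}) := closure_mono (convexHull_mono hextsub)
      _ = closure {xs} := by rw [convexHull_singleton]
      _ = {xs} := closure_singleton
  exact hFsub ⟨hy, hcost⟩

end polytopeFacts

/-- for the optimal vertex x* of a nondegenerate transportation problem with
spanning-tree support T, and supply nodes s₁,…,s_k, demand nodes d₁,…,d_k (k ≥ 2, distinct)
with sᵢ adjacent to dᵢ in T, the cyclic alternating cost sum
∑ᵢ (c_{sᵢ,dᵢ} - c_{sᵢ₊₁,dᵢ}) (indices mod k) is negative. -/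
theorem stmt_15 (m n : ℕ) (s : Fin m → ℝ) (d : Fin n → ℝ) (c : Fin m → Fin n → ℝ)
    (xs : Fin m → Fin n → ℝ)
    (hfeas : xs ∈ transportationPolytope' m n s d)
    (hvert : xs ∈ Set.extremePoints ℝ (transportationPolytope' m n s d))
    (hopt : ∀ y ∈ transportationPolytope' m n s d,
      ∑ i, ∑ j, c i j * xs i j ≤ ∑ i, ∑ j, c i j * y i j)
    (hnd : ∀ y ∈ Set.extremePoints ℝ (transportationPolytope' m n s d), y ≠ xs →
      ∑ i, ∑ j, c i j * xs i j < ∑ i, ∑ j, c i j * y i j)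
    (k : ℕ) [NeZero k] (hk : 2 ≤ k)
    (sC : Fin k → Fin m) (dC : Fin k → Fin n)
    (hsC : Function.Injective sC) (hdC : Function.Injective dC)
    (hadj : ∀ i : Fin k, 0 < xs (sC i) (dC i)) :
    ∑ i : Fin k, (c (sC i) (dC i) - c (sC (i + 1)) (dC i)) < 0 := by
  have hknem : (Finset.univ : Finset (Fin k)).Nonempty := ⟨0, Finset.mem_univ 0⟩
  set ε := Finset.univ.inf' hknem fun t => xs (sC t) (dC t) with hεdef
  have hε : 0 < ε := (Finset.lt_inf'_iff hknem).2 fun t _ => hadj t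
  have hεle : ∀ t : Fin k, ε ≤ xs (sC t) (dC t) := fun t =>
    Finset.inf'_le _ (Finset.mem_univ t)
  set y := fun i j => xs i j + ε * cycDelta sC dC i j with hydef
  have hyapp : ∀ i j, y i j = xs i j + ε * cycDelta sC dC i j := fun i j => rfl
  have hyP : y ∈ transportationPolytope' m n s d := by
    refine ⟨fun i j => ?_, fun i => ?_, fun j => ?_⟩
    · by_cases hex : ∃ t : Fin k, i = sC t ∧ j = dC t
      · obtain ⟨t, hi, hj⟩ := hex
        subst hi; subst hj
        rw [hyapp, cycDelta_neg_edge sC dC hk hsC hdC t]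
        have := hεle t
        linarith
      · push_neg at hex
        rw [hyapp]
        exact add_nonneg (hfeas.1 i j)
          (mul_nonneg hε.le (cycDelta_nonneg_off sC dC i j
            (fun t h => hex t h.1 h.2)))
    · simp only [hyapp, Finset.sum_add_distrib, ← Finset.mul_sum, cycDelta_row,
        mul_zero, add_zero]
      exact hfeas.2.1 i
    · simp only [hyapp, Finset.sum_add_distrib, ← Finset.mul_sum, cycDelta_col,
        mul_zero, add_zero]
      exact hfeas.2.2 j
  have hcosty : ∑ i, ∑ j, c i j * y i j
      = (∑ i, ∑ j, c i j * xs i j)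
        + ε * ∑ t : Fin k, (c (sC (t+1)) (dC t) - c (sC t) (dC t)) := by
    have happ : ∀ i j, c i j * y i j
        = c i j * xs i j + ε * (c i j * cycDelta sC dC i j) := by
      intro i j; rw [hyapp]; ring
    simp only [happ, Finset.sum_add_distrib, ← Finset.mul_sum]
    rw [cycDelta_cost]
  set S := ∑ i : Fin k, (c (sC i) (dC i) - c (sC (i + 1)) (dC i)) with hSdef
  have hnegS : (∑ t : Fin k, (c (sC (t+1)) (dC t) - c (sC t) (dC t))) = -S := by
    rw [hSdef, ← Finset.sum_neg_distrib]
    exact Finset.sum_congr rfl fun t _ => by ring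
  have hle : ∑ i, ∑ j, c i j * xs i j ≤ ∑ i, ∑ j, c i j * y i j := hopt y hyP
  rw [hcosty, hnegS] at hle
  have hSle : S ≤ 0 := by nlinarith
  rcases lt_or_eq_of_le hSle with h | h
  · exact h
  · exfalso
    have hS0 : S = 0 := h
    have hcost0 : ∑ i, ∑ j, c i j * y i j = ∑ i, ∑ j, c i j * xs i j := by
      rw [hcosty, hnegS, hS0]; ring
    have hyx : y = xs := tp_face_singleton m n s d c xs hopt hnd y hyP hcost0
    have := congrFun (congrFun hyx (sC 0)) (dC 0)
    rw [hyapp, cycDelta_neg_edge sC dC hk hsC hdC 0] at this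
    have : ε = 0 := by linarith
    linarith
end

section
/- Every $2 \times n$ nondegenerate transportation polytope has monotone diameter at most $n$: for any nondegenerate linear objective $c$ and any vertex $x$, there is a $c$-monotone edge path from $x$ to the optimal vertex of length at most $n$. In particular $2\times n$ transportation polytopes satisfy the monotone Hirsch conjecture (monotone diameter $\le$ number of facets minus dimension). -/
namespace Stmt16

variable {n : ℕ} (s : Fin 2 → ℝ) (d : Fin n → ℝ)

/-- sum of demands over a set -/
def DD (A : Finset (Fin n)) : ℝ := ∑ j ∈ A, d j

/-- row-0 profile of the vertex with full columns `A` and split column `k` -/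
def yv (A : Finset (Fin n)) (k : Fin n) : Fin n → ℝ := fun j =>
  (if j ∈ A then d j else 0) + (if j = k then s 0 - DD d A else 0)

/-- the vertex of the polytope with full columns `A` and split column `k` -/
def Vt (A : Finset (Fin n)) (k : Fin n) : Fin 2 → Fin n → ℝ := fun i j =>
  if i = 0 then yv s d A k j else d j - yv s d A k j

lemma sum_yv (A : Finset (Fin n)) (k : Fin n) : ∑ j, yv s d A k j = s 0 := by
  simp [yv, Finset.sum_add_distrib, Finset.sum_ite_eq', DD, Finset.sum_ite_mem]

section basic
variable {s d}

lemma memP_iff {x : Fin 2 → Fin n → ℝ} :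
    x ∈ transportationPolytope' 2 n s d ↔
      (∀ i j, 0 ≤ x i j) ∧ (∀ i, ∑ j, x i j = s i) ∧ (∀ j, ∑ i, x i j = d j) :=
  Iff.rfl

lemma col_sum {x : Fin 2 → Fin n → ℝ} (hx : x ∈ transportationPolytope' 2 n s d) (j : Fin n) :
    x 0 j + x 1 j = d j := by
  have := hx.2.2 j
  rwa [Fin.sum_univ_two] at this

lemma le_d {x : Fin 2 → Fin n → ℝ} (hx : x ∈ transportationPolytope' 2 n s d) (i : Fin 2)
    (j : Fin n) : x i j ≤ d j := by
  have h := col_sum hx j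
  have h0 := hx.1 0 j
  have h1 := hx.1 1 j
  fin_cases i
  · show x 0 j ≤ d j; linarith
  · show x 1 j ≤ d j; linarith

lemma Vt_apply_zero (A : Finset (Fin n)) (k : Fin n) (j : Fin n) :
    Vt s d A k 0 j = yv s d A k j := rfl

lemma Vt_apply_one (A : Finset (Fin n)) (k : Fin n) (j : Fin n) :
    Vt s d A k 1 j = d j - yv s d A k j := rfl

lemma yv_mem (A : Finset (Fin n)) {k j : Fin n} (hk : k ∉ A) (hj : j ∈ A) :
    yv s d A k j = d j := by
  have : j ≠ k := fun h => hk (h ▸ hj)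
  simp [yv, hj, this]

lemma yv_split (A : Finset (Fin n)) {k : Fin n} (hk : k ∉ A) :
    yv s d A k k = s 0 - DD d A := by simp [yv, hk]

lemma yv_out (A : Finset (Fin n)) {k j : Fin n} (hj : j ∉ A) (hjk : j ≠ k) :
    yv s d A k j = 0 := by simp [yv, hj, hjk]

lemma Vt_memP (hsd : ∑ i, s i = ∑ j, d j) {A : Finset (Fin n)} {k : Fin n}
    (hd : ∀ j, 0 ≤ d j) (hk : k ∉ A) (h0 : 0 ≤ s 0 - DD d A) (h1 : s 0 - DD d A ≤ d k) :
    Vt s d A k ∈ transportationPolytope' 2 n s d := by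
  have hy0 : ∀ j, 0 ≤ yv s d A k j := by
    intro j
    by_cases hj : j ∈ A
    · rw [yv_mem A hk hj]; exact hd j
    · by_cases hjk : j = k
      · subst hjk; rw [yv_split A hk]; exact h0
      · rw [yv_out A hj hjk]
  have hy1 : ∀ j, yv s d A k j ≤ d j := by
    intro j
    by_cases hj : j ∈ A
    · rw [yv_mem A hk hj]
    · by_cases hjk : j = k
      · subst hjk; rw [yv_split A hk]; linarith
      · rw [yv_out A hj hjk]; exact hd j
  refine ⟨?_, ?_, ?_⟩
  · intro i j
    by_cases hi : i = 0
    · subst hi; simpa [Vt] using hy0 j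
    · simp only [Vt, hi, if_false]
      linarith [hy1 j]
  · intro i
    by_cases hi : i = 0
    · subst hi; simpa [Vt] using sum_yv s d A k
    · simp only [Vt, hi, if_false]
      rw [Finset.sum_sub_distrib, sum_yv s d A k]
      have h2 : s 0 + s 1 = ∑ j, d j := by rwa [Fin.sum_univ_two] at hsd
      have : i = 1 := by omega
      subst this; linarith
  · intro j
    rw [Fin.sum_univ_two]
    simp [Vt]

variable {n : ℕ} {s : Fin 2 → ℝ} {d : Fin n → ℝ}

lemma eq_Vt_of_pinned {x : Fin 2 → Fin n → ℝ} (hx : x ∈ transportationPolytope' 2 n s d)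
    {A : Finset (Fin n)} {k : Fin n} (hk : k ∉ A)
    (h1 : ∀ j ∈ A, x 1 j = 0) (h0 : ∀ j, j ∉ A → j ≠ k → x 0 j = 0) :
    x = Vt s d A k := by
  have hxA : ∀ j ∈ A, x 0 j = d j := by
    intro j hj
    have h := col_sum hx j
    have h' := h1 j hj
    linarith
  have hAsub : A ⊆ Finset.univ.erase k := fun a ha =>
    Finset.mem_erase.2 ⟨fun h => hk (h ▸ ha), Finset.mem_univ a⟩
  have hsum : ∑ j ∈ Finset.univ.erase k, x 0 j = DD d A := by
    rw [← Finset.sum_subset hAsub (fun j hj hjA => h0 j hjA (Finset.ne_of_mem_erase hj))]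
    exact Finset.sum_congr rfl hxA
  have hx0k : x 0 k = s 0 - DD d A := by
    have h := Finset.add_sum_erase Finset.univ (x 0) (Finset.mem_univ k)
    have h2 := hx.2.1 0
    rw [hsum] at h
    linarith
  have hrow0 : ∀ j, x 0 j = yv s d A k j := by
    intro j
    by_cases hj : j ∈ A
    · rw [yv_mem A hk hj]; exact hxA j hj
    · by_cases hjk : j = k
      · subst hjk; rw [yv_split A hk]; exact hx0k
      · rw [yv_out A hj hjk]; exact h0 j hj hjk
  funext i j
  by_cases hi : i = 0
  · subst hi; rw [Vt_apply_zero]; exact hrow0 j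
  · have hi1 : i = 1 := by omega
    subst hi1
    rw [Vt_apply_one]
    have h := col_sum hx j
    rw [hrow0 j] at h
    linarith

lemma aux_zero {a b u v : ℝ} (ha : 0 < a) (hb : 0 < b) (hu : 0 ≤ u) (hv : 0 ≤ v)
    (h : a * u + b * v = 0) : u = 0 ∧ v = 0 := by
  constructor <;> nlinarith

lemma Vt_extreme (hsd : ∑ i, s i = ∑ j, d j) {A : Finset (Fin n)} {k : Fin n}
    (hd : ∀ j, 0 ≤ d j) (hk : k ∉ A) (h0 : 0 ≤ s 0 - DD d A) (h1 : s 0 - DD d A ≤ d k) :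
    Vt s d A k ∈ Set.extremePoints ℝ (transportationPolytope' 2 n s d) := by
  refine ⟨Vt_memP hsd hd hk h0 h1, ?_⟩
  intro x₁ hx₁ x₂ hx₂ hseg
  obtain ⟨a, b, ha, hb, hab, habx⟩ := hseg
  have key : ∀ i j, Vt s d A k i j = 0 → x₁ i j = 0 ∧ x₂ i j = 0 := by
    intro i j hz
    have h := congrFun (congrFun habx i) j
    simp only [Pi.add_apply, Pi.smul_apply, smul_eq_mul] at h
    rw [hz] at h
    exact aux_zero ha hb (hx₁.1 i j) (hx₂.1 i j) h
  have pin : ∀ x, x ∈ transportationPolytope' 2 n s d →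
      (∀ i j, Vt s d A k i j = 0 → x i j = 0) → x = Vt s d A k := by
    intro x hx hpin
    refine eq_Vt_of_pinned hx hk (fun j hj => hpin 1 j ?_) (fun j hj hjk => hpin 0 j ?_)
    · rw [Vt_apply_one, yv_mem A hk hj]; ring
    · rw [Vt_apply_zero, yv_out A hj hjk]
  exact pin x₁ hx₁ (fun i j hz => (key i j hz).1)

variable {n : ℕ} {s : Fin 2 → ℝ} {d : Fin n → ℝ}

lemma frac_unique {x : Fin 2 → Fin n → ℝ}
    (hx : x ∈ Set.extremePoints ℝ (transportationPolytope' 2 n s d)) {j1 j2 : Fin n}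
    (h01 : x 0 j1 ≠ 0) (h11 : x 1 j1 ≠ 0) (h02 : x 0 j2 ≠ 0) (h12 : x 1 j2 ≠ 0) :
    j1 = j2 := by
  by_contra hne
  have hxP := hx.1
  have hp01 : 0 < x 0 j1 := lt_of_le_of_ne (hxP.1 0 j1) (Ne.symm h01)
  have hp11 : 0 < x 1 j1 := lt_of_le_of_ne (hxP.1 1 j1) (Ne.symm h11)
  have hp02 : 0 < x 0 j2 := lt_of_le_of_ne (hxP.1 0 j2) (Ne.symm h02)
  have hp12 : 0 < x 1 j2 := lt_of_le_of_ne (hxP.1 1 j2) (Ne.symm h12)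
  set ε := min (min (x 0 j1) (x 1 j1)) (min (x 0 j2) (x 1 j2)) with hεdef
  have hε : 0 < ε := lt_min (lt_min hp01 hp11) (lt_min hp02 hp12)
  have hε1 : ε ≤ x 0 j1 := le_trans (min_le_left _ _) (min_le_left _ _)
  have hε2 : ε ≤ x 1 j1 := le_trans (min_le_left _ _) (min_le_right _ _)
  have hε3 : ε ≤ x 0 j2 := le_trans (min_le_right _ _) (min_le_left _ _)
  have hε4 : ε ≤ x 1 j2 := le_trans (min_le_right _ _) (min_le_right _ _)
  set g : Fin n → ℝ := fun j => (if j = j1 then 1 else 0) - (if j = j2 then 1 else 0) with hg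
  set cc : Fin 2 → ℝ := fun i => (if i = 0 then 1 else 0) - (if i = 1 then 1 else 0) with hcc
  have hsumg : ∑ j, g j = 0 := by
    simp [hg, Finset.sum_sub_distrib, Finset.sum_ite_eq']
  have hsumc : ∑ i, cc i = 0 := by
    rw [Fin.sum_univ_two]; norm_num [hcc]
  have hgj1 : g j1 = 1 := by simp [hg, hne]
  have hgj2 : g j2 = -1 := by simp [hg, Ne.symm hne]
  have hc0 : cc 0 = 1 := by norm_num [hcc]
  have hc1 : cc 1 = -1 := by norm_num [hcc]
  set w : Fin 2 → Fin n → ℝ := fun i j => cc i * g j with hw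
  have hmem : ∀ (t : ℝ), |t| ≤ ε → x + t • w ∈ transportationPolytope' 2 n s d := by
    intro t ht
    refine ⟨?_, ?_, ?_⟩
    · intro i j
      simp only [Pi.add_apply, Pi.smul_apply, smul_eq_mul, hw]
      have hta : -ε ≤ t ∧ t ≤ ε := abs_le.1 ht
      by_cases hj1 : j = j1
      · subst hj1
        by_cases hi : i = 0
        · subst hi
          rw [hc0, hgj1]; rw [show (1:ℝ) * 1 = 1 by ring]; linarith [hta.1]
        · have hi1 : i = 1 := by omega
          subst hi1
          rw [hc1, hgj1]; rw [show (-1:ℝ) * 1 = -1 by ring]; linarith [hta.2]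
      · by_cases hj2 : j = j2
        · subst hj2
          by_cases hi : i = 0
          · subst hi
            rw [hc0, hgj2]; rw [show (1:ℝ) * -1 = -1 by ring]; linarith [hta.2]
          · have hi1 : i = 1 := by omega
            subst hi1
            rw [hc1, hgj2]; rw [show (-1:ℝ) * -1 = 1 by ring]; linarith [hta.1]
        · have : g j = 0 := by simp [hg, hj1, hj2]
          rw [this]
          simpa using hxP.1 i j
    · intro i
      simp only [Pi.add_apply, Pi.smul_apply, smul_eq_mul, hw]
      rw [Finset.sum_add_distrib, ← Finset.mul_sum, ← Finset.mul_sum, hsumg]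
      rw [hxP.2.1 i]; ring
    · intro j
      simp only [Pi.add_apply, Pi.smul_apply, smul_eq_mul, hw]
      rw [Finset.sum_add_distrib]
      have : ∑ i, t * (cc i * g j) = t * g j * ∑ i, cc i := by
        rw [Finset.mul_sum]; congr 1; funext i; ring
      rw [this, hsumc, hxP.2.2 j]; ring
  have hz1 := hmem ε (by rw [abs_of_pos hε])
  have hz2 := hmem (-ε) (by rw [abs_neg, abs_of_pos hε])
  have hseg : x ∈ openSegment ℝ (x + ε • w) (x + (-ε) • w) := by
    refine ⟨1/2, 1/2, by norm_num, by norm_num, by norm_num, ?_⟩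
    funext i j
    simp only [Pi.add_apply, Pi.smul_apply, smul_eq_mul]
    ring
  have heq := hx.2 hz1 hz2 hseg
  have hpt := congrFun (congrFun heq 0) j1
  simp only [Pi.add_apply, Pi.smul_apply, smul_eq_mul, hw] at hpt
  rw [hc0, hgj1] at hpt
  nlinarith

variable {n : ℕ} {s : Fin 2 → ℝ} {d : Fin n → ℝ}

lemma card_eq_sum_cnt (x : Fin 2 → Fin n → ℝ) :
    (Finset.univ.filter (fun p : Fin 2 × Fin n => x p.1 p.2 ≠ 0)).card =
      ∑ j, ((if x 0 j ≠ 0 then 1 else 0) + (if x 1 j ≠ 0 then 1 else 0)) := by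
  rw [Finset.card_filter, Fintype.sum_prod_type, Fin.sum_univ_two, ← Finset.sum_add_distrib]

lemma extreme_structure {x : Fin 2 → Fin n → ℝ}
    (hx : x ∈ Set.extremePoints ℝ (transportationPolytope' 2 n s d))
    (hcard : (Finset.univ.filter (fun p : Fin 2 × Fin n => x p.1 p.2 ≠ 0)).card = n + 1) :
    ∃ (A : Finset (Fin n)) (k : Fin n), k ∉ A ∧ 0 < s 0 - DD d A ∧ s 0 - DD d A < d k ∧
      x = Vt s d A k ∧ (∀ j, 0 < d j) := by
  classical
  set cnt : Fin n → ℕ := fun j => (if x 0 j ≠ 0 then 1 else 0) + (if x 1 j ≠ 0 then 1 else 0)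
    with hcnt
  have hsum : ∑ j, cnt j = n + 1 := by rw [← card_eq_sum_cnt x]; exact hcard
  have hxP := hx.1
  -- there is a column with both entries nonzero
  have hex : ∃ k, x 0 k ≠ 0 ∧ x 1 k ≠ 0 := by
    by_contra hno
    push_neg at hno
    have hle : ∀ j, cnt j ≤ 1 := by
      intro j
      by_cases h0 : x 0 j = 0
      · by_cases h1 : x 1 j = 0 <;> simp [hcnt, h0, h1]
      · have := hno j h0
        simp [hcnt, h0, this]
    have hb := Finset.sum_le_card_nsmul Finset.univ cnt 1 (fun j _ => hle j)
    simp only [Finset.card_univ, Fintype.card_fin, smul_eq_mul, mul_one] at hb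
    have hbridge : Finset.univ.sum cnt = ∑ j, cnt j := rfl
    omega
  obtain ⟨k, hk0, hk1⟩ := hex
  have hcntk : cnt k = 2 := by simp [hcnt, hk0, hk1]
  have huniq : ∀ j, x 0 j ≠ 0 → x 1 j ≠ 0 → j = k := fun j h0 h1 =>
    frac_unique hx h0 h1 hk0 hk1
  have hle1 : ∀ j, j ≠ k → cnt j ≤ 1 := by
    intro j hj
    by_cases h0 : x 0 j = 0
    · by_cases h1 : x 1 j = 0 <;> simp [hcnt, h0, h1]
    · by_cases h1 : x 1 j = 0
      · simp [hcnt, h0, h1]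
      · exact absurd (huniq j h0 h1) hj
  have hker : ∑ j ∈ Finset.univ.erase k, cnt j = n - 1 := by
    have h := Finset.add_sum_erase Finset.univ cnt (Finset.mem_univ k)
    have hbridge : Finset.univ.sum cnt = ∑ j, cnt j := rfl
    omega
  have hcard_er : (Finset.univ.erase k).card = n - 1 := by
    rw [Finset.card_erase_of_mem (Finset.mem_univ k), Finset.card_univ, Fintype.card_fin]
  have hone : ∀ j, j ≠ k → cnt j = 1 := by
    intro j hj
    by_contra hne1
    have hj0 : cnt j = 0 := by have := hle1 j hj; omega
    have hjmem : j ∈ Finset.univ.erase k := Finset.mem_erase.2 ⟨hj, Finset.mem_univ j⟩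
    have h := Finset.add_sum_erase (Finset.univ.erase k) cnt hjmem
    have hb := Finset.sum_le_card_nsmul ((Finset.univ.erase k).erase j) cnt 1
      (fun l hl => hle1 l (Finset.ne_of_mem_erase (Finset.mem_of_mem_erase hl)))
    have hc2 : ((Finset.univ.erase k).erase j).card = n - 2 := by
      rw [Finset.card_erase_of_mem hjmem, hcard_er]
      omega
    rw [hc2] at hb
    simp only [smul_eq_mul, mul_one] at hb
    have hn2 : 2 ≤ n := by
      have h2 := Finset.one_lt_card.2 ⟨j, Finset.mem_univ j, k, Finset.mem_univ k, hj⟩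
      rwa [Finset.card_univ, Fintype.card_fin] at h2
    have hbr1 : ((Finset.univ.erase k).erase j).sum cnt
        = ∑ x ∈ (Finset.univ.erase k).erase j, cnt x := rfl
    have hbr2 : (Finset.univ.erase k).sum cnt = ∑ x ∈ Finset.univ.erase k, cnt x := rfl
    omega
  -- all demands positive
  have hd : ∀ j, 0 < d j := by
    intro j
    have hcol := col_sum hxP j
    by_cases hj : j = k
    · subst hj
      have := lt_of_le_of_ne (hxP.1 0 j) (Ne.symm hk0)
      have := lt_of_le_of_ne (hxP.1 1 j) (Ne.symm hk1)
      linarith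
    · have h1 := hone j hj
      by_cases h0 : x 0 j ≠ 0
      · have := lt_of_le_of_ne (hxP.1 0 j) (Ne.symm h0)
        have := hxP.1 1 j
        linarith
      · have hx1 : x 1 j ≠ 0 := by
          by_contra h1'
          simp [hcnt, h0, h1'] at h1
        have := lt_of_le_of_ne (hxP.1 1 j) (Ne.symm hx1)
        have := hxP.1 0 j
        linarith
  set A : Finset (Fin n) := Finset.univ.filter (fun j => j ≠ k ∧ x 0 j ≠ 0) with hA
  have hkA : k ∉ A := by simp [hA]
  have hxeq : x = Vt s d A k := by
    refine eq_Vt_of_pinned hxP hkA ?_ ?_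
    · intro j hj
      rw [hA, Finset.mem_filter] at hj
      obtain ⟨-, hjk, hj0⟩ := hj
      have h1 := hone j hjk
      by_contra h1'
      simp [hcnt, hj0, h1'] at h1
    · intro j hjA hjk
      by_contra h0
      exact hjA (by rw [hA, Finset.mem_filter]; exact ⟨Finset.mem_univ j, hjk, h0⟩)
  refine ⟨A, k, hkA, ?_, ?_, hxeq, hd⟩
  · have : x 0 k = s 0 - DD d A := by rw [hxeq, Vt_apply_zero, yv_split A hkA]
    have := lt_of_le_of_ne (hxP.1 0 k) (Ne.symm hk0)
    linarith
  · have h1 : x 1 k = d k - (s 0 - DD d A) := by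
      rw [hxeq, Vt_apply_one, yv_split A hkA]
    have := lt_of_le_of_ne (hxP.1 1 k) (Ne.symm hk1)
    linarith

variable {n : ℕ} {s : Fin 2 → ℝ} {d : Fin n → ℝ}

lemma no_subset_sum (hsd : ∑ i, s i = ∑ j, d j)
    (hnondeg : ∀ x ∈ Set.extremePoints ℝ (transportationPolytope' 2 n s d),
      (Finset.univ.filter (fun p : Fin 2 × Fin n => x p.1 p.2 ≠ 0)).card = n + 1)
    (hd : ∀ j, 0 < d j) (A : Finset (Fin n)) : DD d A ≠ s 0 := by
  intro hDA
  set z : Fin 2 → Fin n → ℝ := fun i j =>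
    if i = 0 then (if j ∈ A then d j else 0) else (if j ∈ A then 0 else d j) with hz
  have hcol : ∀ j, z 0 j + z 1 j = d j := by
    intro j
    by_cases hj : j ∈ A <;> simp [hz, hj]
  have hrow0 : ∑ j, z 0 j = DD d A := by
    simp only [hz, if_pos rfl]
    rw [Finset.sum_ite_mem, Finset.univ_inter]
    rfl
  have hzP : z ∈ transportationPolytope' 2 n s d := by
    refine ⟨?_, ?_, ?_⟩
    · intro i j
      by_cases hi : i = 0 <;> by_cases hj : j ∈ A <;>
        simp [hz, hi, hj, le_of_lt (hd j)]
    · intro i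
      by_cases hi : i = 0
      · subst hi; rw [hrow0, hDA]
      · have hi1 : i = 1 := by omega
        subst hi1
        have hall : ∑ j, (z 0 j + z 1 j) = ∑ j, d j := Finset.sum_congr rfl (fun j _ => hcol j)
        rw [Finset.sum_add_distrib] at hall
        have h2 : s 0 + s 1 = ∑ j, d j := by rwa [Fin.sum_univ_two] at hsd
        rw [hrow0, hDA] at hall
        linarith
    · intro j
      rw [Fin.sum_univ_two]; exact hcol j
  have hzx : z ∈ Set.extremePoints ℝ (transportationPolytope' 2 n s d) := by
    refine ⟨hzP, ?_⟩
    intro x₁ hx₁ x₂ hx₂ hseg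
    obtain ⟨a, b, ha, hb, hab, habx⟩ := hseg
    have key : ∀ i j, z i j = 0 → x₁ i j = 0 ∧ x₂ i j = 0 := by
      intro i j hzero
      have h := congrFun (congrFun habx i) j
      simp only [Pi.add_apply, Pi.smul_apply, smul_eq_mul] at h
      rw [hzero] at h
      exact aux_zero ha hb (hx₁.1 i j) (hx₂.1 i j) h
    have pin : ∀ x, x ∈ transportationPolytope' 2 n s d →
        (∀ i j, z i j = 0 → x i j = 0) → x = z := by
      intro x hx hpin
      funext i j
      by_cases hj : j ∈ A
      · have hz1 : z 1 j = 0 := by simp [hz, hj]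
        have hx1 : x 1 j = 0 := hpin 1 j hz1
        by_cases hi : i = 0
        · subst hi
          have := col_sum hx j
          rw [hx1] at this
          simp [hz, hj]; linarith
        · have hi1 : i = 1 := by omega
          subst hi1; rw [hx1, hz1]
      · have hz0 : z 0 j = 0 := by simp [hz, hj]
        have hx0 : x 0 j = 0 := hpin 0 j hz0
        by_cases hi : i = 0
        · subst hi; rw [hx0, hz0]
        · have hi1 : i = 1 := by omega
          subst hi1
          have := col_sum hx j
          rw [hx0] at this
          simp [hz, hj]; linarith
    exact pin x₁ hx₁ (fun i j h => (key i j h).1)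
  have hcard := hnondeg z hzx
  rw [card_eq_sum_cnt z] at hcard
  have hone : ∀ j, ((if z 0 j ≠ 0 then 1 else 0) + (if z 1 j ≠ 0 then 1 else 0)) = 1 := by
    intro j
    by_cases hj : j ∈ A <;> simp [hz, hj, ne_of_gt (hd j)]
  rw [Finset.sum_congr rfl (fun j _ => hone j)] at hcard
  simp only [Finset.sum_const, Finset.card_univ, Fintype.card_fin, smul_eq_mul, mul_one] at hcard
  omega

end basic
variable {n : ℕ} (s : Fin 2 → ℝ) (d : Fin n → ℝ)

/-- row-0 profile of an endpoint of the edge where columns in `B` are full, columns outside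
`B ∪ {p,q}` are empty, and column `p` is as full as possible. -/
def yw (B : Finset (Fin n)) (p q : Fin n) : Fin n → ℝ := fun j =>
  (if j ∈ B then d j else 0) + (if j = p then min (d p) (s 0 - DD d B) else 0) +
    (if j = q then (s 0 - DD d B) - min (d p) (s 0 - DD d B) else 0)

/-- the endpoint of an edge of the polytope -/
def Ept (B : Finset (Fin n)) (p q : Fin n) : Fin 2 → Fin n → ℝ := fun i j =>
  if i = 0 then yw s d B p q j else d j - yw s d B p q j

section ept
variable {s d} {B : Finset (Fin n)} {p q : Fin n}

lemma Ept_zero (B : Finset (Fin n)) (p q : Fin n) (j : Fin n) :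
    Ept s d B p q 0 j = yw s d B p q j := rfl

lemma Ept_one (B : Finset (Fin n)) (p q : Fin n) (j : Fin n) :
    Ept s d B p q 1 j = d j - yw s d B p q j := rfl

lemma yw_p (hpB : p ∉ B) (hpq : p ≠ q) : yw s d B p q p = min (d p) (s 0 - DD d B) := by
  simp [yw, hpB, hpq]

lemma yw_q (hqB : q ∉ B) (hpq : p ≠ q) :
    yw s d B p q q = (s 0 - DD d B) - min (d p) (s 0 - DD d B) := by
  simp [yw, hqB, Ne.symm hpq]

lemma yw_B (hpB : p ∉ B) (hqB : q ∉ B) {j : Fin n} (hj : j ∈ B) : yw s d B p q j = d j := by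
  have h1 : j ≠ p := fun h => hpB (h ▸ hj)
  have h2 : j ≠ q := fun h => hqB (h ▸ hj)
  simp [yw, hj, h1, h2]

lemma yw_out {j : Fin n} (hj : j ∉ B) (h1 : j ≠ p) (h2 : j ≠ q) : yw s d B p q j = 0 := by
  simp [yw, hj, h1, h2]

lemma yw_eq_lt (hpq : p ≠ q) (h : s 0 - DD d B ≤ d p) : yw s d B p q = yv s d B p := by
  funext j
  rw [yw, yv, min_eq_right h]
  simp

lemma yw_eq_gt (hpq : p ≠ q) (hpB : p ∉ B) (hqB : q ∉ B) (h : d p ≤ s 0 - DD d B) :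
    yw s d B p q = yv s d (insert p B) q := by
  funext j
  rw [yw, yv, min_eq_left h]
  have hDD : DD d (insert p B) = d p + DD d B := Finset.sum_insert hpB
  by_cases hj : j ∈ B
  · have h1 : j ≠ p := fun h => hpB (h ▸ hj)
    have h2 : j ≠ q := fun h => hqB (h ▸ hj)
    simp [hj, h1, h2, Finset.mem_insert]
  · by_cases hjp : j = p
    · subst hjp
      simp [hj, hpq, hDD, Finset.mem_insert]
    · by_cases hjq : j = q
      · subst hjq
        simp [hj, hjp, hDD, Finset.mem_insert]
        ring
      · simp [hj, hjp, hjq, Finset.mem_insert]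

lemma Ept_eq_Vt_lt (hpq : p ≠ q) (h : s 0 - DD d B ≤ d p) :
    Ept s d B p q = Vt s d B p := by
  funext i j
  rw [Ept, Vt, yw_eq_lt hpq h]

lemma Ept_eq_Vt_gt (hpq : p ≠ q) (hpB : p ∉ B) (hqB : q ∉ B) (h : d p ≤ s 0 - DD d B) :
    Ept s d B p q = Vt s d (insert p B) q := by
  funext i j
  rw [Ept, Vt, yw_eq_gt hpq hpB hqB h]

lemma Ept_extreme (hsd : ∑ i, s i = ∑ j, d j) (hd : ∀ j, 0 < d j) (hpq : p ≠ q)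
    (hpB : p ∉ B) (hqB : q ∉ B) (hT0 : 0 < s 0 - DD d B)
    (hTpq : s 0 - DD d B < d p + d q) (hTp : s 0 - DD d B ≠ d p) :
    Ept s d B p q ∈ Set.extremePoints ℝ (transportationPolytope' 2 n s d) := by
  rcases lt_or_gt_of_ne hTp with h | h
  · rw [Ept_eq_Vt_lt hpq h.le]
    exact Vt_extreme hsd (fun j => (hd j).le) hpB hT0.le h.le
  · rw [Ept_eq_Vt_gt hpq hpB hqB h.le]
    have hq' : q ∉ insert p B := by
      simp [Finset.mem_insert, Ne.symm hpq, hqB]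
    have hDD : DD d (insert p B) = d p + DD d B := Finset.sum_insert hpB
    refine Vt_extreme hsd (fun j => (hd j).le) hq' ?_ ?_
    · rw [hDD]; linarith
    · rw [hDD]; linarith

lemma Ept_memP (hsd : ∑ i, s i = ∑ j, d j) (hd : ∀ j, 0 < d j) (hpq : p ≠ q)
    (hpB : p ∉ B) (hqB : q ∉ B) (hT0 : 0 < s 0 - DD d B)
    (hTpq : s 0 - DD d B < d p + d q) (hTp : s 0 - DD d B ≠ d p) :
    Ept s d B p q ∈ transportationPolytope' 2 n s d :=
  (Ept_extreme hsd hd hpq hpB hqB hT0 hTpq hTp).1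

lemma gap_pos (hd : ∀ j, 0 < d j) (hT0 : 0 < s 0 - DD d B)
    (hTpq : s 0 - DD d B < d p + d q) :
    (s 0 - DD d B) - min (d p) (s 0 - DD d B) < min (d q) (s 0 - DD d B) := by
  rcases le_total (d p) (s 0 - DD d B) with h | h
  · rw [min_eq_left h]
    rcases le_total (d q) (s 0 - DD d B) with h' | h'
    · rw [min_eq_left h']; linarith
    · rw [min_eq_right h']; linarith [hd p]
  · rw [min_eq_right h]
    have : 0 < min (d q) (s 0 - DD d B) := lt_min (hd q) hT0
    linarith

end ept
variable {n : ℕ} {s : Fin 2 → ℝ} {d : Fin n → ℝ}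

/-- objective value -/
def ff (c : Fin 2 → Fin n → ℝ) (x : Fin 2 → Fin n → ℝ) : ℝ := ∑ i, ∑ j, c i j * x i j

lemma ff_eq (c : Fin 2 → Fin n → ℝ) {x : Fin 2 → Fin n → ℝ}
    (hx : x ∈ transportationPolytope' 2 n s d) :
    ff c x = ∑ j, c 1 j * d j + ∑ j, (c 0 j - c 1 j) * x 0 j := by
  rw [ff, Fin.sum_univ_two, ← Finset.sum_add_distrib, ← Finset.sum_add_distrib]
  refine Finset.sum_congr rfl (fun j _ => ?_)
  have h := col_sum hx j
  linear_combination c 1 j * h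

lemma ff_diff (c : Fin 2 → Fin n → ℝ) {x x' : Fin 2 → Fin n → ℝ}
    (hx : x ∈ transportationPolytope' 2 n s d) (hx' : x' ∈ transportationPolytope' 2 n s d)
    {p q : Fin n} (hpq : p ≠ q) (hsame : ∀ j, j ≠ p → j ≠ q → x 0 j = x' 0 j) :
    ff c x - ff c x' = ((c 0 p - c 1 p) - (c 0 q - c 1 q)) * (x 0 p - x' 0 p) := by
  have hsub : ({p, q} : Finset (Fin n)) ⊆ Finset.univ := Finset.subset_univ _
  have hzero : ∀ j ∈ Finset.univ, j ∉ ({p, q} : Finset (Fin n)) →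
      (fun j => (c 0 j - c 1 j) * (x 0 j - x' 0 j)) j = 0 := by
    intro j _ hj
    simp only [Finset.mem_insert, Finset.mem_singleton] at hj
    push_neg at hj
    show (c 0 j - c 1 j) * (x 0 j - x' 0 j) = 0
    rw [hsame j hj.1 hj.2]; ring
  have hzero2 : ∀ j ∈ Finset.univ, j ∉ ({p, q} : Finset (Fin n)) →
      (fun j => x 0 j - x' 0 j) j = 0 := by
    intro j _ hj
    simp only [Finset.mem_insert, Finset.mem_singleton] at hj
    push_neg at hj
    show x 0 j - x' 0 j = 0
    rw [hsame j hj.1 hj.2]; ring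
  have hΔ : x 0 p - x' 0 p + (x 0 q - x' 0 q) = 0 := by
    have h1 : ∑ j, (x 0 j - x' 0 j) = 0 := by
      rw [Finset.sum_sub_distrib, hx.2.1 0, hx'.2.1 0]; ring
    rw [← Finset.sum_subset hsub hzero2] at h1
    rwa [Finset.sum_pair hpq] at h1
  have hmain : ff c x - ff c x' = ∑ j, (c 0 j - c 1 j) * (x 0 j - x' 0 j) := by
    rw [ff_eq c hx, ff_eq c hx']
    rw [show ∀ a b e : ℝ, a + b - (a + e) = b - e from fun a b e => by ring]
    rw [← Finset.sum_sub_distrib]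
    exact Finset.sum_congr rfl (fun j _ => by ring)
  rw [hmain, ← Finset.sum_subset hsub hzero, Finset.sum_pair hpq]
  linear_combination (c 0 q - c 1 q) * hΔ

variable {n : ℕ} {s : Fin 2 → ℝ} {d : Fin n → ℝ}

lemma convexP : Convex ℝ (transportationPolytope' 2 n s d) := by
  intro x hx y hy a b ha hb hab
  refine ⟨?_, ?_, ?_⟩
  · intro i j
    simp only [Pi.add_apply, Pi.smul_apply, smul_eq_mul]
    have := hx.1 i j
    have := hy.1 i j
    positivity
  · intro i
    simp only [Pi.add_apply, Pi.smul_apply, smul_eq_mul]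
    rw [Finset.sum_add_distrib, ← Finset.mul_sum, ← Finset.mul_sum, hx.2.1 i, hy.2.1 i]
    linear_combination s i * hab
  · intro j
    simp only [Pi.add_apply, Pi.smul_apply, smul_eq_mul]
    rw [Finset.sum_add_distrib, ← Finset.mul_sum, ← Finset.mul_sum, hx.2.2 j, hy.2.2 j]
    linear_combination d j * hab

/-- the exposing linear functional of an edge -/
def edgeFun (B : Finset (Fin n)) (p q : Fin n) : (Fin 2 → Fin n → ℝ) →ₗ[ℝ] ℝ where
  toFun x := ∑ j ∈ B, x 0 j + ∑ j ∈ Finset.univ \ (B ∪ {p, q}), x 1 j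
  map_add' x y := by
    simp only [Pi.add_apply, Finset.sum_add_distrib]
    ring
  map_smul' a x := by
    simp only [Pi.smul_apply, smul_eq_mul, RingHom.id_apply, ← Finset.mul_sum]
    ring

lemma edge_exposed (hsd : ∑ i, s i = ∑ j, d j) (hd : ∀ j, 0 < d j) {B : Finset (Fin n)}
    {p q : Fin n} (hpq : p ≠ q) (hpB : p ∉ B) (hqB : q ∉ B) (hT0 : 0 < s 0 - DD d B)
    (hTpq : s 0 - DD d B < d p + d q) (hTp : s 0 - DD d B ≠ d p) (hTq : s 0 - DD d B ≠ d q) :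
    IsExposed ℝ (transportationPolytope' 2 n s d)
      (segment ℝ (Ept s d B p q) (Ept s d B q p)) := by
  classical
  set T := s 0 - DD d B with hT
  set e1 := Ept s d B p q with he1
  set e2 := Ept s d B q p with he2
  have he1P : e1 ∈ transportationPolytope' 2 n s d :=
    Ept_memP hsd hd hpq hpB hqB hT0 hTpq hTp
  have he2P : e2 ∈ transportationPolytope' 2 n s d :=
    Ept_memP hsd hd (Ne.symm hpq) hqB hpB hT0 (by linarith) hTq
  set S2 := Finset.univ \ (B ∪ {p, q}) with hS2
  have hmemS2 : ∀ j, j ∈ S2 ↔ (j ∉ B ∧ j ≠ p ∧ j ≠ q) := by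
    intro j
    simp only [hS2, Finset.mem_sdiff, Finset.mem_union, Finset.mem_insert,
      Finset.mem_singleton, not_or, Finset.mem_univ, true_and] <;> tauto
  set M := DD d B + ∑ j ∈ S2, d j with hM
  intro _
  refine ⟨LinearMap.toContinuousLinearMap (edgeFun B p q), ?_⟩
  have hl : ∀ x : Fin 2 → Fin n → ℝ, LinearMap.toContinuousLinearMap (edgeFun B p q) x =
      ∑ j ∈ B, x 0 j + ∑ j ∈ S2, x 1 j := fun x => rfl
  have hub : ∀ y ∈ transportationPolytope' 2 n s d,
      LinearMap.toContinuousLinearMap (edgeFun B p q) y ≤ M := by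
    intro y hy
    rw [hl, hM]
    refine add_le_add (Finset.sum_le_sum fun j _ => le_d hy 0 j)
      (Finset.sum_le_sum fun j _ => le_d hy 1 j)
  have hle1 : LinearMap.toContinuousLinearMap (edgeFun B p q) e1 = M := by
    rw [hl, hM]
    congr 1
    · exact Finset.sum_congr rfl fun j hj => yw_B hpB hqB hj
    · refine Finset.sum_congr rfl fun j hj => ?_
      obtain ⟨h1, h2, h3⟩ := (hmemS2 j).1 hj
      show d j - yw s d B p q j = d j
      rw [yw_out h1 h2 h3, sub_zero]
  have hle2 : LinearMap.toContinuousLinearMap (edgeFun B p q) e2 = M := by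
    rw [hl, hM]
    congr 1
    · exact Finset.sum_congr rfl fun j hj => yw_B hqB hpB hj
    · refine Finset.sum_congr rfl fun j hj => ?_
      obtain ⟨h1, h2, h3⟩ := (hmemS2 j).1 hj
      show d j - yw s d B q p j = d j
      rw [yw_out h1 h3 h2, sub_zero]
  apply Set.eq_of_subset_of_subset
  · -- segment ⊆ face
    intro x hx
    have hxP : x ∈ transportationPolytope' 2 n s d :=
      convexP.segment_subset he1P he2P hx
    refine ⟨hxP, ?_⟩
    obtain ⟨a, b, ha, hb, hab, habx⟩ := hx
    intro y hy
    have : LinearMap.toContinuousLinearMap (edgeFun B p q) x = M := by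
      rw [← habx, map_add, map_smul, map_smul, hle1, hle2, smul_eq_mul, smul_eq_mul]
      linear_combination M * hab
    rw [this]
    exact hub y hy
  · -- face ⊆ segment
    intro x hx
    obtain ⟨hxP, hmax⟩ := hx
    have hlxM : LinearMap.toContinuousLinearMap (edgeFun B p q) x = M :=
      le_antisymm (hub x hxP) (hle1 ▸ hmax e1 he1P)
    -- termwise pinning
    have hsplit : ∑ j ∈ B, (d j - x 0 j) + ∑ j ∈ S2, (d j - x 1 j) = 0 := by
      rw [hl] at hlxM
      rw [Finset.sum_sub_distrib, Finset.sum_sub_distrib]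
      have : (DD d B : ℝ) + ∑ j ∈ S2, d j = M := hM.symm
      rw [DD] at this
      linarith
    have hnn1 : (0:ℝ) ≤ ∑ j ∈ B, (d j - x 0 j) :=
      Finset.sum_nonneg fun j _ => by linarith [le_d hxP 0 j]
    have hnn2 : (0:ℝ) ≤ ∑ j ∈ S2, (d j - x 1 j) :=
      Finset.sum_nonneg fun j _ => by linarith [le_d hxP 1 j]
    have hB0 : ∀ j ∈ B, x 0 j = d j := by
      intro j hj
      have hz := (Finset.sum_eq_zero_iff_of_nonneg
        (fun j _ => by linarith [le_d hxP 0 j] : ∀ j ∈ B, (0:ℝ) ≤ d j - x 0 j)).1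
        (by linarith) j hj
      linarith
    have hS20 : ∀ j ∈ S2, x 0 j = 0 := by
      intro j hj
      have hz := (Finset.sum_eq_zero_iff_of_nonneg
        (fun j _ => by linarith [le_d hxP 1 j] : ∀ j ∈ S2, (0:ℝ) ≤ d j - x 1 j)).1
        (by linarith) j hj
      have := col_sum hxP j
      linarith
    -- identify x on the segment
    set t := x 0 p with ht
    have hx0q : x 0 q = T - t := by
      have hrow := hxP.2.1 0
      have h1 := Finset.add_sum_erase Finset.univ (x 0) (Finset.mem_univ p)
      have hqmem : q ∈ Finset.univ.erase p := Finset.mem_erase.2 ⟨Ne.symm hpq, Finset.mem_univ q⟩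
      have h2 := Finset.add_sum_erase (Finset.univ.erase p) (x 0) hqmem
      have hBsub : B ⊆ (Finset.univ.erase p).erase q := by
        intro j hj
        exact Finset.mem_erase.2 ⟨fun h => hqB (h ▸ hj),
          Finset.mem_erase.2 ⟨fun h => hpB (h ▸ hj), Finset.mem_univ j⟩⟩
      have h3 : ∑ j ∈ (Finset.univ.erase p).erase q, x 0 j = DD d B := by
        rw [← Finset.sum_subset hBsub (fun j hj hjB => hS20 j ((hmemS2 j).2
          ⟨hjB, Finset.ne_of_mem_erase (Finset.mem_of_mem_erase hj),
            Finset.ne_of_mem_erase hj⟩))]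
        exact Finset.sum_congr rfl hB0
      rw [h3] at h2
      rw [← h2] at h1
      rw [hrow] at h1
      rw [hT]
      linarith
    have htub1 : t ≤ d p := le_d hxP 0 p
    have htlb : 0 ≤ t := hxP.1 0 p
    have hq0 : 0 ≤ T - t := by rw [← hx0q]; exact hxP.1 0 q
    have hqub : T - t ≤ d q := by rw [← hx0q]; exact le_d hxP 0 q
    set α := T - min (d q) T with hα
    set β := min (d p) T with hβ
    have hαβ : α < β := by
      rw [hα, hβ]
      have := gap_pos (p := q) (q := p) hd hT0 (by linarith)
      rw [← hT] at this
      linarith [this]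
    have htα : α ≤ t := by
      rw [hα]
      have : T - t ≤ min (d q) T := le_min hqub (by linarith)
      linarith
    have htβ : t ≤ β := le_min htub1 (by linarith)
    set a := (t - α) / (β - α) with haa
    set b := (β - t) / (β - α) with hbb
    have hba : (0:ℝ) < β - α := by linarith
    have ha : 0 ≤ a := div_nonneg (by linarith) hba.le
    have hb : 0 ≤ b := div_nonneg (by linarith) hba.le
    have hab : a + b = 1 := by
      rw [haa, hbb, ← add_div, show t - α + (β - t) = β - α by ring]
      exact div_self hba.ne'
    refine ⟨a, b, ha, hb, hab, ?_⟩
    have hcomb0 : ∀ j, a * e1 0 j + b * e2 0 j = x 0 j := by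
      intro j
      by_cases hj : j ∈ B
      · rw [he1, he2, Ept_zero, Ept_zero, yw_B hpB hqB hj, yw_B hqB hpB hj, hB0 j hj]
        linear_combination d j * hab
      · by_cases hjp : j = p
        · subst hjp
          rw [he1, he2, Ept_zero, Ept_zero, yw_p hpB hpq, yw_q hpB (Ne.symm hpq), ← hT, ← hβ,
            ← hα, ← ht, haa, hbb, div_mul_eq_mul_div, div_mul_eq_mul_div, ← add_div,
            div_eq_iff hba.ne']
          ring
        · by_cases hjq : j = q
          · rw [hjq, he1, he2, Ept_zero, Ept_zero, yw_q hqB hpq, yw_p hqB (Ne.symm hpq), ← hT,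
              ← hβ, hx0q]
            rw [show min (d q) T = T - α by rw [hα]; ring]
            rw [haa, hbb, div_mul_eq_mul_div, div_mul_eq_mul_div, ← add_div,
              div_eq_iff hba.ne']
            ring
          · have hjS2 : j ∈ S2 := (hmemS2 j).2 ⟨hj, hjp, hjq⟩
            rw [he1, he2, Ept_zero, Ept_zero, yw_out hj hjp hjq, yw_out hj hjq hjp,
              hS20 j hjS2]
            ring
    funext i j
    simp only [Pi.add_apply, Pi.smul_apply, smul_eq_mul]
    by_cases hi : i = 0
    · subst hi; exact hcomb0 j
    · have hi1 : i = 1 := by omega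
      subst hi1
      have h1 : e1 1 j = d j - e1 0 j := rfl
      have h2 : e2 1 j = d j - e2 0 j := rfl
      have h3 := col_sum hxP j
      rw [h1, h2]
      have hthis := hcomb0 j
      linear_combination d j * hab - h3 - hthis

variable {n : ℕ} {s : Fin 2 → ℝ} {d : Fin n → ℝ}

lemma pivot_pack (hsd : ∑ i, s i = ∑ j, d j) (hd : ∀ j, 0 < d j) {B : Finset (Fin n)}
    {p q : Fin n} (hpq : p ≠ q) (hpB : p ∉ B) (hqB : q ∉ B) (hT0 : 0 < s 0 - DD d B)
    (hTpq : s 0 - DD d B < d p + d q) (hTp : s 0 - DD d B ≠ d p) (hTq : s 0 - DD d B ≠ d q)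
    (c : Fin 2 → Fin n → ℝ) :
    Ept s d B p q ≠ Ept s d B q p ∧
    Ept s d B p q ∈ Set.extremePoints ℝ (transportationPolytope' 2 n s d) ∧
    Ept s d B q p ∈ Set.extremePoints ℝ (transportationPolytope' 2 n s d) ∧
    IsExposed ℝ (transportationPolytope' 2 n s d)
      (segment ℝ (Ept s d B p q) (Ept s d B q p)) ∧
    ∃ m : ℝ, 0 < m ∧ ff c (Ept s d B p q) - ff c (Ept s d B q p)
        = ((c 0 p - c 1 p) - (c 0 q - c 1 q)) * m := by
  have he1x := Ept_extreme hsd hd hpq hpB hqB hT0 hTpq hTp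
  have he2x := Ept_extreme hsd hd (Ne.symm hpq) hqB hpB hT0 (by linarith) hTq
  have hgapq : Ept s d B p q 0 q < Ept s d B q p 0 q := by
    rw [Ept_zero, Ept_zero, yw_q hqB hpq, yw_p hqB (Ne.symm hpq)]
    exact gap_pos hd hT0 hTpq
  have hne : Ept s d B p q ≠ Ept s d B q p := fun h =>
    absurd (congrFun (congrFun h 0) q) (ne_of_lt hgapq)
  refine ⟨hne, he1x, he2x, edge_exposed hsd hd hpq hpB hqB hT0 hTpq hTp hTq, ?_⟩
  have hgapp : Ept s d B q p 0 p < Ept s d B p q 0 p := by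
    rw [Ept_zero, Ept_zero, yw_q hpB (Ne.symm hpq), yw_p hpB hpq]
    exact gap_pos hd hT0 (by linarith)
  refine ⟨Ept s d B p q 0 p - Ept s d B q p 0 p, by linarith, ?_⟩
  refine ff_diff c he1x.1 he2x.1 hpq ?_
  intro j hjp hjq
  rw [Ept_zero, Ept_zero]
  by_cases hj : j ∈ B
  · rw [yw_B hpB hqB hj, yw_B hqB hpB hj]
  · rw [yw_out hj hjp hjq, yw_out hj hjq hjp]

/-- the conclusion of the theorem, as a statement about a starting vertex `x` and
a bound `F` on the number of steps -/
def Reaches (s : Fin 2 → ℝ) (d : Fin n → ℝ) (c : Fin 2 → Fin n → ℝ)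
    (x : Fin 2 → Fin n → ℝ) (F : ℕ) : Prop :=
  ∃ L, L ≤ F ∧ ∃ p : Fin (L + 1) → (Fin 2 → Fin n → ℝ),
    p 0 = x ∧
    (∀ t, p t ∈ Set.extremePoints ℝ (transportationPolytope' 2 n s d)) ∧
    (∀ t : Fin L, p t.castSucc ≠ p t.succ ∧
      IsExposed ℝ (transportationPolytope' 2 n s d)
        (segment ℝ (p t.castSucc) (p t.succ)) ∧
      ∑ i, ∑ j, c i j * p t.succ i j < ∑ i, ∑ j, c i j * p t.castSucc i j) ∧
    ∀ y ∈ transportationPolytope' 2 n s d,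
      ∑ i, ∑ j, c i j * p (Fin.last L) i j ≤ ∑ i, ∑ j, c i j * y i j

lemma Reaches.mono {c : Fin 2 → Fin n → ℝ} {x : Fin 2 → Fin n → ℝ} {F F' : ℕ}
    (h : Reaches s d c x F) (hFF : F ≤ F') : Reaches s d c x F' := by
  obtain ⟨L, hL, hp⟩ := h
  exact ⟨L, le_trans hL hFF, hp⟩

lemma Reaches.cons {c : Fin 2 → Fin n → ℝ} {x x' : Fin 2 → Fin n → ℝ} {F : ℕ}
    (hx : x ∈ Set.extremePoints ℝ (transportationPolytope' 2 n s d))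
    (hne : x ≠ x')
    (hexp : IsExposed ℝ (transportationPolytope' 2 n s d) (segment ℝ x x'))
    (hlt : ∑ i, ∑ j, c i j * x' i j < ∑ i, ∑ j, c i j * x i j)
    (h : Reaches s d c x' F) : Reaches s d c x (F + 1) := by
  obtain ⟨L, hL, p, hp0, hpV, hpE, hopt⟩ := h
  refine ⟨L + 1, by omega, Fin.cases x p, ?_, ?_, ?_, ?_⟩
  · rfl
  · intro t
    refine Fin.cases ?_ ?_ t
    · exact hx
    · exact hpV
  · intro t
    refine Fin.cases ?_ ?_ t
    · show x ≠ p 0 ∧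
        IsExposed ℝ (transportationPolytope' 2 n s d) (segment ℝ x (p 0)) ∧
        ∑ i, ∑ j, c i j * p 0 i j < ∑ i, ∑ j, c i j * x i j
      rw [hp0]
      exact ⟨hne, hexp, hlt⟩
    · exact hpE
  · exact hopt

lemma reaches_terminal (hsd : ∑ i, s i = ∑ j, d j) (hd : ∀ j, 0 < d j)
    {c : Fin 2 → Fin n → ℝ} {A : Finset (Fin n)} {k : Fin n} (hk : k ∉ A)
    (hT0 : 0 < s 0 - DD d A) (hTk : s 0 - DD d A < d k)
    (hA : ∀ a ∈ A, c 0 a - c 1 a ≤ c 0 k - c 1 k)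
    (hout : ∀ j, j ∉ A → j ≠ k → c 0 k - c 1 k ≤ c 0 j - c 1 j) (F : ℕ) :
    Reaches s d c (Vt s d A k) F := by
  have hVP := Vt_memP hsd (fun j => (hd j).le) hk hT0.le hTk.le
  have hVx := Vt_extreme hsd (fun j => (hd j).le) hk hT0.le hTk.le
  refine ⟨0, Nat.zero_le F, fun _ => Vt s d A k, rfl, fun _ => hVx, fun t => t.elim0, ?_⟩
  intro y hy
  show ff c (Vt s d A k) ≤ ff c y
  rw [ff_eq c hVP, ff_eq c hy]
  have hterm : ∀ j, 0 ≤ ((c 0 j - c 1 j) - (c 0 k - c 1 k)) * (y 0 j - Vt s d A k 0 j) := by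
    intro j
    by_cases hj : j ∈ A
    · rw [Vt_apply_zero, yv_mem A hk hj]
      have h1 := hA j hj
      have h2 := le_d hy 0 j
      have h3 := mul_nonneg (neg_nonneg.mpr (by linarith : (c 0 j - c 1 j) - (c 0 k - c 1 k) ≤ 0))
        (neg_nonneg.mpr (by linarith : y 0 j - d j ≤ 0))
      nlinarith [h3]
    · by_cases hjk : j = k
      · subst hjk
        rw [show (c 0 j - c 1 j) - (c 0 j - c 1 j) = 0 by ring, zero_mul]
      · rw [Vt_apply_zero, yv_out A hj hjk]
        have h1 := hout j hj hjk
        have h2 := hy.1 0 j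
        exact mul_nonneg (by linarith) (by linarith)
  have hsum := Finset.sum_nonneg (fun j (_ : j ∈ Finset.univ) => hterm j)
  have hzero : ∑ j, (y 0 j - Vt s d A k 0 j) = 0 := by
    rw [Finset.sum_sub_distrib, hy.2.1 0, hVP.2.1 0]; ring
  have hexpand : ∑ j, ((c 0 j - c 1 j) - (c 0 k - c 1 k)) * (y 0 j - Vt s d A k 0 j)
      = (∑ j, (c 0 j - c 1 j) * y 0 j) - (∑ j, (c 0 j - c 1 j) * Vt s d A k 0 j)
        - (c 0 k - c 1 k) * ∑ j, (y 0 j - Vt s d A k 0 j) := by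
    rw [Finset.mul_sum, ← Finset.sum_sub_distrib, ← Finset.sum_sub_distrib]
    exact Finset.sum_congr rfl (fun j _ => by ring)
  rw [hzero, mul_zero, sub_zero] at hexpand
  rw [hexpand] at hsum
  linarith

variable {n : ℕ} {s : Fin 2 → ℝ} {d : Fin n → ℝ}

lemma reaches_terminal' (hsd : ∑ i, s i = ∑ j, d j) (hd : ∀ j, 0 < d j)
    {c : Fin 2 → Fin n → ℝ} {rt : Fin n → ℝ}
    (hsign : ∀ p q : Fin n, c 0 p - c 1 p < c 0 q - c 1 q → rt p < rt q)
    {A : Finset (Fin n)} {k : Fin n} (hk : k ∉ A)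
    (hT0 : 0 < s 0 - DD d A) (hTk : s 0 - DD d A < d k)
    (hCout : ∀ b ∈ A, ¬ rt k < rt b) (hCin : ∀ j, j ∉ A → j ≠ k → ¬ rt j < rt k) (F : ℕ) :
    Reaches s d c (Vt s d A k) F := by
  refine reaches_terminal hsd hd hk hT0 hTk ?_ ?_ F
  · intro a haA
    by_contra hlt'
    push_neg at hlt'
    exact hCout a haA (hsign k a hlt')
  · intro j hjA hjk
    by_contra hlt'
    push_neg at hlt'
    exact hCin j hjA hjk (hsign j k hlt')

lemma main_path (hsd : ∑ i, s i = ∑ j, d j) (hd : ∀ j, 0 < d j)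
    (hN2 : ∀ A : Finset (Fin n), DD d A ≠ s 0)
    {c : Fin 2 → Fin n → ℝ}
    (hcgap : ∀ x ∈ Set.extremePoints ℝ (transportationPolytope' 2 n s d),
      ∀ y ∈ Set.extremePoints ℝ (transportationPolytope' 2 n s d), x ≠ y →
        ∑ i, ∑ j, c i j * x i j ≠ ∑ i, ∑ j, c i j * y i j)
    (rt : Fin n → ℝ) (hinj : Function.Injective rt)
    (hsign : ∀ p q : Fin n, c 0 p - c 1 p < c 0 q - c 1 q → rt p < rt q) :
    ∀ F : ℕ, ∀ A : Finset (Fin n), ∀ k : Fin n, ∀ lo hi : ℝ,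
      k ∉ A → 0 < s 0 - DD d A → s 0 - DD d A < d k →
      (∀ a ∈ A, rt a < hi) → (∀ j, j ∉ A → j ≠ k → lo < rt j) → lo ≤ rt k → rt k ≤ hi →
      (Finset.univ.filter (fun j => lo < rt j ∧ rt j < hi)).card ≤ F →
      Reaches s d c (Vt s d A k) F := by
  intro F
  induction F with
  | zero =>
    intro A k lo hi hk hT0 hTk hGhi hGlo hGk1 hGk2 hcard
    by_cases hCout : ∃ b ∈ A, rt k < rt b
    · exfalso
      obtain ⟨b, hbA, hbk⟩ := hCout
      have hbS : b ∈ Finset.univ.filter (fun j => lo < rt j ∧ rt j < hi) :=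
        Finset.mem_filter.2 ⟨Finset.mem_univ b, lt_of_le_of_lt hGk1 hbk, hGhi b hbA⟩
      have := Finset.card_pos.2 ⟨b, hbS⟩
      omega
    · by_cases hCin : ∃ j, j ∉ A ∧ j ≠ k ∧ rt j < rt k
      · exfalso
        obtain ⟨j₀, hjA, hjk, hjlt⟩ := hCin
        have hjS : j₀ ∈ Finset.univ.filter (fun j => lo < rt j ∧ rt j < hi) :=
          Finset.mem_filter.2 ⟨Finset.mem_univ j₀, hGlo j₀ hjA hjk,
            lt_of_lt_of_le hjlt hGk2⟩
        have := Finset.card_pos.2 ⟨j₀, hjS⟩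
        omega
      · push_neg at hCout hCin
        exact reaches_terminal' hsd hd hsign hk hT0 hTk
          (fun b hb => not_lt.2 (hCout b hb))
          (fun j h1 h2 => not_lt.2 (hCin j h1 h2)) 0
  | succ F ih =>
    intro A k lo hi hk hT0 hTk hGhi hGlo hGk1 hGk2 hcard
    by_cases hCout : ∃ b ∈ A, rt k < rt b
    · -- pivot out the column b in A with maximal rt
      obtain ⟨b₁, hb₁A, hb₁k⟩ := hCout
      obtain ⟨b, hbmem, hbmax⟩ := Finset.exists_max_image (A.filter (fun a => rt k < rt a)) rt
        ⟨b₁, Finset.mem_filter.2 ⟨hb₁A, hb₁k⟩⟩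
      rw [Finset.mem_filter] at hbmem
      obtain ⟨hbA, hbk⟩ := hbmem
      have hbmax' : ∀ a ∈ A, rt k < rt a → rt a ≤ rt b := fun a ha h =>
        hbmax a (Finset.mem_filter.2 ⟨ha, h⟩)
      have hbne : b ≠ k := fun h => absurd hbk (h ▸ lt_irrefl _)
      have hpB : b ∉ A.erase b := Finset.notMem_erase b A
      have hqB : k ∉ A.erase b := fun h => hk (Finset.mem_of_mem_erase h)
      have hDDB : d b + DD d (A.erase b) = DD d A := Finset.add_sum_erase A d hbA
      have hT0' : 0 < s 0 - DD d (A.erase b) := by have := hd b; linarith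
      have hTpq' : s 0 - DD d (A.erase b) < d b + d k := by linarith
      have hTp' : s 0 - DD d (A.erase b) ≠ d b := fun h => hN2 A (by linarith)
      have hTq' : s 0 - DD d (A.erase b) ≠ d k := by
        intro h
        apply hN2 (insert k (A.erase b))
        show (∑ j ∈ insert k (A.erase b), d j) = s 0
        rw [Finset.sum_insert hqB]
        have : (∑ j ∈ A.erase b, d j) = DD d (A.erase b) := rfl
        linarith
      obtain ⟨hne, he1x, he2x, hexp, m, hm, hffd⟩ :=
        pivot_pack hsd hd hbne hpB hqB hT0' hTpq' hTp' hTq' c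
      have he1V : Ept s d (A.erase b) b k = Vt s d A k := by
        rw [Ept_eq_Vt_gt hbne hpB hqB (by linarith : d b ≤ s 0 - DD d (A.erase b)),
          Finset.insert_erase hbA]
      have hfne : ff c (Ept s d (A.erase b) b k) ≠ ff c (Ept s d (A.erase b) k b) :=
        hcgap _ he1x _ he2x hne
      have hrbk : c 0 k - c 1 k < c 0 b - c 1 b := by
        rcases lt_trichotomy (c 0 b - c 1 b) (c 0 k - c 1 k) with h | h | h
        · exact absurd (hsign b k h) (lt_asymm hbk)
        · exfalso
          apply hfne
          have : ff c (Ept s d (A.erase b) b k) - ff c (Ept s d (A.erase b) k b) = 0 := by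
            rw [hffd, h]; ring
          linarith
        · exact h
      have hflt : ff c (Ept s d (A.erase b) k b) < ff c (Ept s d (A.erase b) b k) := by
        nlinarith [mul_pos (sub_pos.2 hrbk) hm]
      -- fuel accounting
      have hbS : b ∈ Finset.univ.filter (fun j => lo < rt j ∧ rt j < hi) :=
        Finset.mem_filter.2 ⟨Finset.mem_univ b, lt_of_le_of_lt hGk1 hbk, hGhi b hbA⟩
      have hsubS : Finset.univ.filter (fun j => lo < rt j ∧ rt j < rt b) ⊆
          (Finset.univ.filter (fun j => lo < rt j ∧ rt j < hi)).erase b := by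
        intro j hj
        rw [Finset.mem_filter] at hj
        exact Finset.mem_erase.2 ⟨fun h => absurd hj.2.2 (h ▸ lt_irrefl _),
          Finset.mem_filter.2 ⟨Finset.mem_univ j, hj.2.1, lt_trans hj.2.2 (hGhi b hbA)⟩⟩
      have hcard' : (Finset.univ.filter (fun j => lo < rt j ∧ rt j < rt b)).card ≤ F := by
        have h1 := Finset.card_le_card hsubS
        have h2 := Finset.card_erase_of_mem hbS
        have h3 := Finset.card_pos.2 ⟨b, hbS⟩
        omega
      -- invariant parts shared by both outcomes
      have hInew : ∀ a ∈ A.erase b, rt a < rt b := by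
        intro a ha
        have haA := Finset.mem_of_mem_erase ha
        have hanb : a ≠ b := Finset.ne_of_mem_erase ha
        by_cases h : rt k < rt a
        · exact lt_of_le_of_ne (hbmax' a haA h) (fun he => hanb (hinj he))
        · exact lt_of_le_of_lt (le_of_not_gt h) hbk
      rcases lt_or_gt_of_ne hTq' with hcase | hcase
      · -- k remains the split column: next vertex (A.erase b, k)
        have he2V : Ept s d (A.erase b) k b = Vt s d (A.erase b) k :=
          Ept_eq_Vt_lt (Ne.symm hbne) hcase.le
        have hres : Reaches s d c (Vt s d (A.erase b) k) F := by
          refine ih (A.erase b) k lo (rt b) hqB hT0' hcase hInew ?_ hGk1 hbk.le hcard'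
          intro j hj hjk
          by_cases hjb : j = b
          · subst hjb; exact lt_of_le_of_lt hGk1 hbk
          · exact hGlo j (fun hA => hj (Finset.mem_erase.2 ⟨hjb, hA⟩)) hjk
        have hne' : Vt s d A k ≠ Vt s d (A.erase b) k := by
          rw [← he1V, ← he2V]; exact hne
        have hexp' : IsExposed ℝ (transportationPolytope' 2 n s d)
            (segment ℝ (Vt s d A k) (Vt s d (A.erase b) k)) := by
          rw [← he1V, ← he2V]; exact hexp
        have hlt' : ∑ i, ∑ j, c i j * Vt s d (A.erase b) k i j <
            ∑ i, ∑ j, c i j * Vt s d A k i j := by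
          show ff c (Vt s d (A.erase b) k) < ff c (Vt s d A k)
          rw [← he1V, ← he2V]; exact hflt
        exact Reaches.cons (he1V ▸ he1x) hne' hexp' hlt' hres
      · -- b becomes the split column: next vertex (insert k (A.erase b), b)
        have he2V : Ept s d (A.erase b) k b = Vt s d (insert k (A.erase b)) b :=
          Ept_eq_Vt_gt (Ne.symm hbne) hqB hpB hcase.le
        have hbB' : b ∉ insert k (A.erase b) := by
          simp [Finset.mem_insert, hbne, hpB]
        have hDD' : DD d (insert k (A.erase b)) = d k + DD d (A.erase b) :=
          Finset.sum_insert hqB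
        have hres : Reaches s d c (Vt s d (insert k (A.erase b)) b) F := by
          refine ih (insert k (A.erase b)) b lo (rt b) hbB' ?_ ?_ ?_ ?_
            (lt_of_le_of_lt hGk1 hbk).le le_rfl hcard'
          · rw [hDD']; linarith
          · rw [hDD']; linarith
          · intro a ha
            rcases Finset.mem_insert.1 ha with h | h
            · subst h; exact hbk
            · exact hInew a h
          · intro j hj hjb
            have hjk : j ≠ k := fun h => hj (by rw [h]; exact Finset.mem_insert_self k _)
            have hjA : j ∉ A := fun hA =>
              hj (Finset.mem_insert.2 (Or.inr (Finset.mem_erase.2 ⟨hjb, hA⟩)))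
            exact hGlo j hjA hjk
        have hne' : Vt s d A k ≠ Vt s d (insert k (A.erase b)) b := by
          rw [← he1V, ← he2V]; exact hne
        have hexp' : IsExposed ℝ (transportationPolytope' 2 n s d)
            (segment ℝ (Vt s d A k) (Vt s d (insert k (A.erase b)) b)) := by
          rw [← he1V, ← he2V]; exact hexp
        have hlt' : ∑ i, ∑ j, c i j * Vt s d (insert k (A.erase b)) b i j <
            ∑ i, ∑ j, c i j * Vt s d A k i j := by
          show ff c (Vt s d (insert k (A.erase b)) b) < ff c (Vt s d A k)
          rw [← he1V, ← he2V]; exact hflt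
        exact Reaches.cons (he1V ▸ he1x) hne' hexp' hlt' hres
    · by_cases hCin : ∃ j, j ∉ A ∧ j ≠ k ∧ rt j < rt k
      · -- pivot in the column j₀ outside A with minimal rt
        obtain ⟨j₁, hj₁⟩ := hCin
        obtain ⟨j₀, hjmem, hjmin⟩ := Finset.exists_min_image
          (Finset.univ.filter (fun j => j ∉ A ∧ j ≠ k ∧ rt j < rt k)) rt
          ⟨j₁, Finset.mem_filter.2 ⟨Finset.mem_univ j₁, hj₁⟩⟩
        rw [Finset.mem_filter] at hjmem
        obtain ⟨-, hjA, hjk, hjlt⟩ := hjmem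
        have hjmin' : ∀ j, j ∉ A → j ≠ k → rt j < rt k → rt j₀ ≤ rt j := fun j h1 h2 h3 =>
          hjmin j (Finset.mem_filter.2 ⟨Finset.mem_univ j, h1, h2, h3⟩)
        have hTpq' : s 0 - DD d A < d j₀ + d k := by have := hd j₀; linarith
        have hTp' : s 0 - DD d A ≠ d j₀ := by
          intro h
          apply hN2 (insert j₀ A)
          show (∑ j ∈ insert j₀ A, d j) = s 0
          rw [Finset.sum_insert hjA]
          have : (∑ j ∈ A, d j) = DD d A := rfl
          linarith
        have hTq' : s 0 - DD d A ≠ d k := by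
          intro h
          apply hN2 (insert k A)
          show (∑ j ∈ insert k A, d j) = s 0
          rw [Finset.sum_insert hk]
          have : (∑ j ∈ A, d j) = DD d A := rfl
          linarith
        obtain ⟨hne, he1x, he2x, hexp, m, hm, hffd⟩ :=
          pivot_pack hsd hd hjk hjA hk hT0 hTpq' hTp' hTq' c
        have he2V : Ept s d A k j₀ = Vt s d A k :=
          Ept_eq_Vt_lt (Ne.symm hjk) hTk.le
        have hfne : ff c (Ept s d A j₀ k) ≠ ff c (Ept s d A k j₀) :=
          hcgap _ he1x _ he2x hne
        have hrlt : c 0 j₀ - c 1 j₀ < c 0 k - c 1 k := by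
          rcases lt_trichotomy (c 0 j₀ - c 1 j₀) (c 0 k - c 1 k) with h | h | h
          · exact h
          · exfalso
            apply hfne
            have : ff c (Ept s d A j₀ k) - ff c (Ept s d A k j₀) = 0 := by
              rw [hffd, h]; ring
            linarith
          · exact absurd (hsign k j₀ h) (lt_asymm hjlt)
        have hflt : ff c (Ept s d A j₀ k) < ff c (Ept s d A k j₀) := by
          nlinarith [mul_pos (sub_pos.2 hrlt) hm]
        -- fuel accounting
        have hjS : j₀ ∈ Finset.univ.filter (fun j => lo < rt j ∧ rt j < hi) :=
          Finset.mem_filter.2 ⟨Finset.mem_univ j₀, hGlo j₀ hjA hjk,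
            lt_of_lt_of_le hjlt hGk2⟩
        have hsubS : Finset.univ.filter (fun j => rt j₀ < rt j ∧ rt j < hi) ⊆
            (Finset.univ.filter (fun j => lo < rt j ∧ rt j < hi)).erase j₀ := by
          intro j hj
          rw [Finset.mem_filter] at hj
          exact Finset.mem_erase.2 ⟨fun h => absurd hj.2.1 (h ▸ lt_irrefl _),
            Finset.mem_filter.2 ⟨Finset.mem_univ j,
              lt_trans (hGlo j₀ hjA hjk) hj.2.1, hj.2.2⟩⟩
        have hcard' : (Finset.univ.filter (fun j => rt j₀ < rt j ∧ rt j < hi)).card ≤ F := by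
          have h1 := Finset.card_le_card hsubS
          have h2 := Finset.card_erase_of_mem hjS
          have h3 := Finset.card_pos.2 ⟨j₀, hjS⟩
          omega
        have hGnew : ∀ j, j ∉ A → j ≠ j₀ → j ≠ k → rt j₀ < rt j := by
          intro j h1 h2 h3
          by_cases h : rt j < rt k
          · exact lt_of_le_of_ne (hjmin' j h1 h3 h) (fun he => h2 (hinj he).symm)
          · exact lt_of_lt_of_le hjlt (le_of_not_gt h)
        rcases lt_or_gt_of_ne hTp' with hcase | hcase
        · -- j₀ becomes the new split column: next vertex (A, j₀)
          have he1V : Ept s d A j₀ k = Vt s d A j₀ :=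
            Ept_eq_Vt_lt hjk hcase.le
          have hres : Reaches s d c (Vt s d A j₀) F := by
            refine ih A j₀ (rt j₀) hi hjA hT0 hcase hGhi ?_ le_rfl
              (lt_of_lt_of_le hjlt hGk2).le hcard'
            intro j h1 h2
            by_cases hjk' : j = k
            · subst hjk'; exact hjlt
            · exact hGnew j h1 h2 hjk'
          have hne' : Vt s d A k ≠ Vt s d A j₀ := by
            rw [← he2V, ← he1V]; exact Ne.symm hne
          have hexp' : IsExposed ℝ (transportationPolytope' 2 n s d)
              (segment ℝ (Vt s d A k) (Vt s d A j₀)) := by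
            rw [← he2V, ← he1V, segment_symm]; exact hexp
          have hlt' : ∑ i, ∑ j, c i j * Vt s d A j₀ i j <
              ∑ i, ∑ j, c i j * Vt s d A k i j := by
            show ff c (Vt s d A j₀) < ff c (Vt s d A k)
            rw [← he2V, ← he1V]; exact hflt
          exact Reaches.cons (he2V ▸ he2x) hne' hexp' hlt' hres
        · -- j₀ fills completely: next vertex (insert j₀ A, k)
          have he1V : Ept s d A j₀ k = Vt s d (insert j₀ A) k :=
            Ept_eq_Vt_gt hjk hjA hk hcase.le
          have hkB' : k ∉ insert j₀ A := by
            simp [Finset.mem_insert, Ne.symm hjk, hk]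
          have hDD' : DD d (insert j₀ A) = d j₀ + DD d A := Finset.sum_insert hjA
          have hres : Reaches s d c (Vt s d (insert j₀ A) k) F := by
            refine ih (insert j₀ A) k (rt j₀) hi hkB' ?_ ?_ ?_ ?_ hjlt.le hGk2 hcard'
            · rw [hDD']; linarith
            · rw [hDD']; have := hd j₀; linarith
            · intro a ha
              rcases Finset.mem_insert.1 ha with h | h
              · subst h; exact lt_of_lt_of_le hjlt hGk2
              · exact hGhi a h
            · intro j hj hjk'
              have hjj₀ : j ≠ j₀ := fun h =>
                hj (by rw [h]; exact Finset.mem_insert_self j₀ _)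
              have hjA' : j ∉ A := fun hA => hj (Finset.mem_insert.2 (Or.inr hA))
              exact hGnew j hjA' hjj₀ hjk'
          have hne' : Vt s d A k ≠ Vt s d (insert j₀ A) k := by
            rw [← he2V, ← he1V]; exact Ne.symm hne
          have hexp' : IsExposed ℝ (transportationPolytope' 2 n s d)
              (segment ℝ (Vt s d A k) (Vt s d (insert j₀ A) k)) := by
            rw [← he2V, ← he1V, segment_symm]; exact hexp
          have hlt' : ∑ i, ∑ j, c i j * Vt s d (insert j₀ A) k i j <
              ∑ i, ∑ j, c i j * Vt s d A k i j := by
            show ff c (Vt s d (insert j₀ A) k) < ff c (Vt s d A k)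
            rw [← he2V, ← he1V]; exact hflt
          exact Reaches.cons (he2V ▸ he2x) hne' hexp' hlt' hres
      · push_neg at hCout hCin
        exact reaches_terminal' hsd hd hsign hk hT0 hTk
          (fun b hb => not_lt.2 (hCout b hb))
          (fun j h1 h2 => not_lt.2 (hCin j h1 h2)) (F + 1)

end Stmt16
/-- a nondegenerate 2×n transportation polytope has monotone diameter at most
n: for every nondegenerate linear objective c and every vertex x₀ there is a c-monotone edge
path from x₀ to the optimal vertex of length at most n. Since such a polytope has at most 2n
facets and dimension n - 1 ≥ ... this realizes the monotone Hirsch bound. -/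
theorem stmt_16 (n : ℕ) (s : Fin 2 → ℝ) (d : Fin n → ℝ)
    (hsd : ∑ i, s i = ∑ j, d j)
    (hnondeg : ∀ x ∈ Set.extremePoints ℝ (transportationPolytope' 2 n s d),
      (Finset.univ.filter (fun p : Fin 2 × Fin n => x p.1 p.2 ≠ 0)).card = n + 1)
    (c : Fin 2 → Fin n → ℝ)
    (hc : ∀ x ∈ Set.extremePoints ℝ (transportationPolytope' 2 n s d),
      ∀ y ∈ Set.extremePoints ℝ (transportationPolytope' 2 n s d), x ≠ y →
        ∑ i, ∑ j, c i j * x i j ≠ ∑ i, ∑ j, c i j * y i j)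
    (x0 : Fin 2 → Fin n → ℝ)
    (hx0 : x0 ∈ Set.extremePoints ℝ (transportationPolytope' 2 n s d)) :
    ∃ L, L ≤ n ∧ ∃ p : Fin (L + 1) → (Fin 2 → Fin n → ℝ),
      p 0 = x0 ∧
      (∀ t, p t ∈ Set.extremePoints ℝ (transportationPolytope' 2 n s d)) ∧
      (∀ t : Fin L, p t.castSucc ≠ p t.succ ∧
        IsExposed ℝ (transportationPolytope' 2 n s d)
          (segment ℝ (p t.castSucc) (p t.succ)) ∧
        ∑ i, ∑ j, c i j * p t.succ i j < ∑ i, ∑ j, c i j * p t.castSucc i j) ∧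
      ∀ y ∈ transportationPolytope' 2 n s d,
        ∑ i, ∑ j, c i j * p (Fin.last L) i j ≤ ∑ i, ∑ j, c i j * y i j := by
  classical
  obtain ⟨A0, k0, hk0, hT0, hTk0, hxeq, hd⟩ :=
    Stmt16.extreme_structure hx0 (hnondeg x0 hx0)
  have hN2 := Stmt16.no_subset_sum hsd hnondeg hd
  set r : Fin n → ℝ := fun j => c 0 j - c 1 j with hr
  set S : Finset ℝ := insert 1 ((Finset.univ.filter
      (fun pq : Fin n × Fin n => r pq.1 ≠ r pq.2)).image
      (fun pq => |r pq.1 - r pq.2|)) with hS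
  have hSne : S.Nonempty := ⟨1, Finset.mem_insert_self 1 _⟩
  set ε := S.min' hSne with hεdef
  have hεpos : 0 < ε := by
    have hmem : ε ∈ S := S.min'_mem hSne
    rcases Finset.mem_insert.1 hmem with h | h
    · rw [h]; norm_num
    · obtain ⟨pq, hpq, hval⟩ := Finset.mem_image.1 h
      rw [Finset.mem_filter] at hpq
      rw [← hval]
      exact abs_pos.2 (sub_ne_zero.2 hpq.2)
  have hεle : ∀ p q : Fin n, r p ≠ r q → ε ≤ |r p - r q| := by
    intro p q hne
    refine S.min'_le _ (Finset.mem_insert.2 (Or.inr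
      (Finset.mem_image.2 ⟨(p, q), Finset.mem_filter.2 ⟨Finset.mem_univ _, hne⟩, rfl⟩)))
  set η := ε / (2 * (n + 1)) with hηdef
  have hηpos : 0 < η := by positivity
  have hkey : η * (2 * (n + 1)) = ε := by
    rw [hηdef]; field_simp
  have hηn : η * n < ε / 2 := by nlinarith [hηpos]
  set rt : Fin n → ℝ := fun j => r j + η * ((j : ℕ) : ℝ) with hrt
  have hsign : ∀ p q : Fin n, r p < r q → rt p < rt q := by
    intro p q hpq
    have h1 : ε ≤ |r p - r q| := hεle p q (ne_of_lt hpq)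
    have h2 : |r p - r q| = r q - r p := by rw [abs_of_neg (by linarith)]; ring
    have hp1 : ((p : ℕ) : ℝ) ≤ n := by exact_mod_cast le_of_lt p.isLt
    have hq0 : (0 : ℝ) ≤ ((q : ℕ) : ℝ) := Nat.cast_nonneg _
    have h3 : η * (((p : ℕ) : ℝ) - ((q : ℕ) : ℝ)) ≤ η * n :=
      mul_le_mul_of_nonneg_left (by linarith) hηpos.le
    show r p + η * ((p : ℕ) : ℝ) < r q + η * ((q : ℕ) : ℝ)
    nlinarith [h3, hηn]
  have hinj : Function.Injective rt := by
    intro p q he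
    rcases lt_trichotomy (r p) (r q) with h | h | h
    · exact absurd he (ne_of_lt (hsign p q h))
    · have he' : r p + η * ((p : ℕ) : ℝ) = r q + η * ((q : ℕ) : ℝ) := he
      have h2 : η * ((p : ℕ) : ℝ) = η * ((q : ℕ) : ℝ) := by linarith
      have h3 : ((p : ℕ) : ℝ) = ((q : ℕ) : ℝ) := mul_left_cancel₀ hηpos.ne' h2
      exact Fin.val_injective (Nat.cast_injective h3)
    · exact absurd he.symm (ne_of_lt (hsign q p h))
  set hi := 1 + ∑ j, |rt j| with hhi
  have habs : ∀ j, |rt j| ≤ ∑ j, |rt j| := fun j =>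
    Finset.single_le_sum (fun j _ => abs_nonneg (rt j)) (Finset.mem_univ j)
  have hhilt : ∀ j, rt j < hi := by
    intro j
    have h1 := habs j
    have h2 := le_abs_self (rt j)
    rw [hhi]; linarith
  have hlolt : ∀ j, -hi < rt j := by
    intro j
    have h1 := habs j
    have h2 := neg_abs_le (rt j)
    rw [hhi]; linarith
  have hcard : (Finset.univ.filter (fun j => -hi < rt j ∧ rt j < hi)).card ≤ n := by
    refine le_trans (Finset.card_filter_le _ _) ?_
    rw [Finset.card_univ, Fintype.card_fin]
  have hres := Stmt16.main_path hsd hd hN2 hc rt hinj hsign n A0 k0 (-hi) hi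
    hk0 hT0 hTk0 (fun a _ => hhilt a) (fun j _ _ => hlolt j)
    (hlolt k0).le (hhilt k0).le hcard
  rw [← hxeq] at hres
  exact hres
end
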